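/- arXiv:2108.05970 — 3 statements merged into one kernel-verified Lean document; each statement's English description precedes it below -/
import Mathlib

section
/- Let t ≥ 3 be an integer and let G = (V,E) be a t-hypergraph with |V| = s ≥ 2 vertices and |E| = m hyperedges. Let k ∈ ℕ be a parameter with 2^{t+2}·log₂(s) ≤ k ≤ s. If m ≥ 3s·((2^{t+3}·s·log₂(s))/k)^{t-2}, then there exists a subset S ⊆ V of size |S| ≤ k that spans at least |S| + k/(2^{t+1}·log₂(s)) hyperedges. -/
open scoped Classical

namespace Stmt1Aux

variable {V : Type*} [Fintype V]

lemma two_mul_le_pow_mul {c m m' : ℕ} (h1 : 1 ≤ m') (h : 2*m ≤ m' + c) : 2*m ≤ 2^c * m' := by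
  calc 2*m ≤ m' + c := h
  _ ≤ m' + c*m' := by nlinarith
  _ = (c+1)*m' := by ring
  _ ≤ 2^c * m' := Nat.mul_le_mul_right _ (by have := Nat.lt_two_pow_self (n := c); omega)

omit [Fintype V] in
lemma double_count (A : Finset V) (E : Multiset (Finset V)) :
    ∑ v ∈ A, E.countP (fun e => v ∈ e) = (E.map (fun e => (e ∩ A).card)).sum := by
  induction E using Multiset.induction with
  | empty => simp
  | cons e E ih =>
    simp only [Multiset.countP_cons, Multiset.map_cons, Multiset.sum_cons, Finset.sum_add_distrib, ih]
    have h : ∑ v ∈ A, (if v ∈ e then 1 else 0) = (e ∩ A).card := by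
      rw [Finset.sum_ite_mem, Finset.inter_comm]
      simp
    omega

lemma exists_top (b : V → ℕ) (Q : ℕ) (hQ : Q ≤ Fintype.card V) :
    ∃ R : Finset V, R.card = Q ∧ Q * (∑ v, b v) ≤ Fintype.card V * ∑ v ∈ R, b v := by
  have hne : ((Finset.univ : Finset V).powersetCard Q).Nonempty := by
    obtain ⟨T, hT, hTc⟩ := Finset.exists_subset_card_eq (by simpa using hQ :
      Q ≤ (Finset.univ : Finset V).card)
    exact ⟨T, Finset.mem_powersetCard.2 ⟨hT, hTc⟩⟩
  obtain ⟨R, hRmem, hRmax⟩ := Finset.exists_max_image _ (fun T => ∑ v ∈ T, b v) hne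
  obtain ⟨-, hRcard⟩ := Finset.mem_powersetCard.1 hRmem
  refine ⟨R, hRcard, ?_⟩
  have hkey : ∀ r ∈ R, ∀ o ∉ R, b o ≤ b r := by
    intro r hr o ho
    have hor : o ≠ r := fun h => ho (h ▸ hr)
    set R' : Finset V := insert o (R.erase r) with hR'
    have hR'mem : R' ∈ (Finset.univ : Finset V).powersetCard Q := by
      refine Finset.mem_powersetCard.2 ⟨Finset.subset_univ _, ?_⟩
      rw [Finset.card_insert_of_notMem (by simp [hor, ho]), Finset.card_erase_of_mem hr, hRcard]
      have hQ1 : 1 ≤ Q := by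
        rw [← hRcard]; exact Finset.card_pos.2 ⟨r, hr⟩
      omega
    have hle := hRmax R' hR'mem
    have h1 : ∑ v ∈ R', b v = b o + ∑ v ∈ R.erase r, b v := by
      rw [hR', Finset.sum_insert (by simp [hor, ho])]
    have h2 : ∑ v ∈ R.erase r, b v + b r = ∑ v ∈ R, b v := Finset.sum_erase_add _ _ hr
    omega
  have hout : Q * ∑ v ∈ Finset.univ \ R, b v ≤ (Fintype.card V - Q) * ∑ v ∈ R, b v := by
    have hcardout : (Finset.univ \ R).card = Fintype.card V - Q := by
      rw [Finset.card_sdiff_of_subset (Finset.subset_univ _), hRcard, Finset.card_univ]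
    calc Q * ∑ v ∈ Finset.univ \ R, b v = ∑ o ∈ Finset.univ \ R, Q * b o := by
          rw [Finset.mul_sum]
      _ ≤ ∑ o ∈ Finset.univ \ R, ∑ r ∈ R, b r := by
          refine Finset.sum_le_sum fun o ho => ?_
          have hoR : o ∉ R := (Finset.mem_sdiff.1 ho).2
          calc Q * b o = ∑ r ∈ R, b o := by rw [Finset.sum_const, hRcard, smul_eq_mul]
            _ ≤ ∑ r ∈ R, b r := Finset.sum_le_sum fun r hr => hkey r hr o hoR
      _ = (Fintype.card V - Q) * ∑ r ∈ R, b r := by rw [Finset.sum_const, hcardout, smul_eq_mul]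
  have hsplit : ∑ v, b v = ∑ v ∈ R, b v + ∑ v ∈ Finset.univ \ R, b v := by
    rw [← Finset.sum_union (Finset.disjoint_sdiff)]
    congr 1
    simp [Finset.union_sdiff_of_subset (Finset.subset_univ R)]
  have hsub := Nat.sub_add_cancel hQ
  set c := Fintype.card V
  set x := ∑ v ∈ R, b v
  set y := ∑ v ∈ Finset.univ \ R, b v
  calc Q * ∑ v, b v = Q * x + Q * y := by rw [hsplit]; ring
    _ ≤ Q * x + (c - Q) * x := by omega
    _ = (Q + (c - Q)) * x := by ring
    _ = c * x := by rw [Nat.add_sub_cancel' hQ]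


lemma peel (W : Finset V) (E : Multiset (Finset V))
    (hE : ∀ e ∈ E, e ⊆ W ∧ e.Nonempty)
    (hm : 2 * W.card + 1 ≤ Multiset.card E) :
    ∃ V' : Finset V, V'.Nonempty ∧
      ∀ v ∈ V', 3 ≤ (E.filter (· ⊆ V')).countP (fun e => v ∈ e) := by
  by_cases hall : ∀ v ∈ W, 3 ≤ E.countP (fun e => v ∈ e)
  · refine ⟨W, ?_, ?_⟩
    · have hpos : 0 < Multiset.card E := by omega
      obtain ⟨e, he⟩ := Multiset.card_pos_iff_exists_mem.1 hpos
      obtain ⟨x, hx⟩ := (hE e he).2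
      exact ⟨x, (hE e he).1 hx⟩
    · intro v hv
      have hfe : E.filter (· ⊆ W) = E := Multiset.filter_eq_self.2 (fun e he => (hE e he).1)
      rw [hfe]; exact hall v hv
  · push_neg at hall
    obtain ⟨v, hvW, hvdeg⟩ := hall
    have hsplit : Multiset.card (E.filter (fun e => v ∉ e)) + E.countP (fun e => v ∈ e)
        = Multiset.card E := by
      have h := Multiset.filter_add_not (fun e => v ∈ e) E
      have hc := congrArg Multiset.card h
      rw [Multiset.card_add] at hc
      rw [Multiset.countP_eq_card_filter]
      omega
    have hcard' : 2 * (W.erase v).card + 1 ≤ Multiset.card (E.filter (fun e => v ∉ e)) := by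
      rw [Finset.card_erase_of_mem hvW]
      have h1 : 1 ≤ W.card := Finset.card_pos.2 ⟨v, hvW⟩
      omega
    obtain ⟨V', hV'ne, hV'deg⟩ := peel (W.erase v) (E.filter (fun e => v ∉ e))
      (fun e he => by
        have heE := Multiset.mem_of_mem_filter he
        have hnotv := Multiset.of_mem_filter he
        exact ⟨fun x hx => Finset.mem_erase.2 ⟨fun hxv => hnotv (hxv ▸ hx), (hE e heE).1 hx⟩,
          (hE e heE).2⟩) hcard'
    refine ⟨V', hV'ne, fun u hu => ?_⟩
    have hVW : V' ⊆ W.erase v := by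
      intro x hx
      by_contra hxW
      have h3 := hV'deg x hx
      have : 0 < ((E.filter (fun e => v ∉ e)).filter (· ⊆ V')).countP (fun e => x ∈ e) := by omega
      obtain ⟨e, he, hxe⟩ := Multiset.countP_pos.1 this
      have he1 : e ∈ E.filter (fun e => v ∉ e) := Multiset.mem_of_mem_filter he
      have hnv : v ∉ e := (Multiset.mem_filter.1 he1).2
      have heE : e ∈ E := Multiset.mem_of_mem_filter he1
      exact hxW (Finset.mem_erase.2 ⟨fun h => hnv (h ▸ hxe), (hE e heE).1 hxe⟩)
    have heq : E.filter (· ⊆ V') = (E.filter (fun e => v ∉ e)).filter (· ⊆ V') := by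
      rw [Multiset.filter_filter]
      refine Multiset.filter_congr fun e he => ?_
      constructor
      · intro h1
        exact ⟨h1, fun hve => (Finset.mem_erase.1 (hVW (h1 hve))).1 rfl⟩
      · exact fun h => h.1
    rw [heq]
    exact hV'deg u hu
termination_by W.card
decreasing_by exact Finset.card_erase_lt_of_mem hvW

lemma lemG (E : Multiset (Finset V)) (h2 : ∀ e ∈ E, e.card ≤ 2)
    (hm : 2 * Fintype.card V + 1 ≤ Multiset.card E) :
    ∃ (U : Finset V) (F : Multiset (Finset V)), F ≤ E ∧ (∀ f ∈ F, f ⊆ U) ∧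
      Multiset.card F = U.card + 1 ∧ U.card ≤ 4 * Nat.log 2 (Fintype.card V) + 9 := by
  classical
  by_cases hemp : (∅ : Finset V) ∈ E
  · refine ⟨∅, {∅}, Multiset.singleton_le.2 hemp, ?_, by simp, by simp⟩
    intro f hf
    rw [Multiset.mem_singleton.1 hf]
  -- all edges nonempty
  have hne : ∀ e ∈ E, e.Nonempty := by
    intro e he
    rcases Finset.eq_empty_or_nonempty e with h | h
    · exact absurd (h ▸ he) hemp
    · exact h
  obtain ⟨V', hV'ne, hdeg⟩ := peel Finset.univ E
    (fun e he => ⟨Finset.subset_univ e, hne e he⟩) (by simpa using hm)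
  set E₁ : Multiset (Finset V) := E.filter (· ⊆ V') with hE₁
  have hE₁le : E₁ ≤ E := Multiset.filter_le _ _
  have hE₁V' : ∀ e ∈ E₁, e ⊆ V' := fun e he => (Multiset.mem_filter.1 he).2
  have hE₁E : ∀ e ∈ E₁, e ∈ E := fun e he => Multiset.mem_of_mem_filter he
  have hE₁card : ∀ e ∈ E₁, e.card ≤ 2 := fun e he => h2 e (hE₁E e he)
  have hE₁ne : ∀ e ∈ E₁, e.Nonempty := fun e he => hne e (hE₁E e he)
  obtain ⟨v₀, hv₀⟩ := hV'ne
  set L := Nat.log 2 (Fintype.card V) with hL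
  set R := L + 2 with hR
  -- the balls
  set Bstep : Finset V → Finset V :=
    fun Bj => Bj ∪ V'.filter (fun w => ∃ e ∈ E₁, w ∈ e ∧ ∃ u ∈ e, u ∈ Bj) with hBstep
  set B : ℕ → Finset V := fun j => Nat.rec {v₀} (fun _ Bj => Bstep Bj) j with hB
  have hB0 : B 0 = {v₀} := rfl
  have hBsucc : ∀ j, B (j+1) = Bstep (B j) := fun j => rfl
  have hBmono : ∀ j, B j ⊆ B (j+1) := by
    intro j
    rw [hBsucc]
    exact Finset.subset_union_left
  have hBmono' : ∀ i j, i ≤ j → B i ⊆ B j := by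
    intro i j hij
    induction j with
    | zero => have : i = 0 := by omega
              rw [this]
    | succ n ih =>
      rcases Nat.lt_or_ge i (n+1) with h | h
      · exact (ih (by omega)).trans (hBmono n)
      · have : i = n + 1 := by omega
        rw [this]
  have hBV' : ∀ j, B j ⊆ V' := by
    intro j
    induction j with
    | zero => rw [hB0]; simpa using hv₀
    | succ n ih =>
      rw [hBsucc, hBstep]
      exact Finset.union_subset ih (Finset.filter_subset _ _)
  have hBadj : ∀ j e, e ∈ E₁ → (∃ u ∈ e, u ∈ B j) → ∀ w ∈ e, w ∈ B (j+1) := by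
    intro j e he hu w hw
    rw [hBsucc, hBstep]
    refine Finset.mem_union_right _ (Finset.mem_filter.2 ⟨hE₁V' e he hw, e, he, hw, hu⟩)
  -- distance
  set d : V → ℕ := fun v => if h : ∃ j, v ∈ B j then Nat.find h else 0 with hd
  have hdmem : ∀ v, (∃ j, v ∈ B j) → v ∈ B (d v) := by
    intro v h
    rw [hd]; simp only [dif_pos h]
    exact Nat.find_spec h
  have hdmin : ∀ v j, v ∈ B j → d v ≤ j := by
    intro v j hv
    have hh : ∃ i, v ∈ B i := ⟨j, hv⟩
    rw [hd]; simp only [dif_pos hh]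
    exact Nat.find_le hv
  have hd0 : d v₀ = 0 := Nat.le_zero.1 (hdmin v₀ 0 (by rw [hB0]; exact Finset.mem_singleton_self v₀))
  have hdzero : ∀ v, (∃ j, v ∈ B j) → d v = 0 → v = v₀ := by
    intro v h hdv
    have := hdmem v h
    rw [hdv, hB0] at this
    exact Finset.mem_singleton.1 this
  have hdnot : ∀ v, (∃ j, v ∈ B j) → 0 < d v → v ∉ B (d v - 1) := by
    intro v h hpos
    rw [hd] at hpos ⊢
    simp only [dif_pos h] at hpos ⊢
    exact Nat.find_min h (by omega)
  -- parent function
  have hparex : ∀ v : V, ∃ (e : Finset V) (u : V),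
      (v ∈ B R ∧ v ≠ v₀) → (e ∈ E₁ ∧ v ∈ e ∧ u ∈ e ∧ u ∈ B (d v - 1) ∧ e = {v, u} ∧ d u + 1 = d v) := by
    intro v
    by_cases h : v ∈ B R ∧ v ≠ v₀
    · obtain ⟨hv, hv0⟩ := h
      have hex : ∃ j, v ∈ B j := ⟨R, hv⟩
      have hdpos : 0 < d v := by
        rcases Nat.eq_zero_or_pos (d v) with h0 | h0
        · exact absurd (hdzero v hex h0) hv0
        · exact h0
      have hvd : v ∈ B (d v) := hdmem v hex
      have hvd1 : v ∉ B (d v - 1) := hdnot v hex hdpos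
      have hstep : B (d v) = Bstep (B (d v - 1)) := by
        have heq : d v = (d v - 1) + 1 := by omega
        have hstep' := hBsucc (d v - 1)
        rw [← heq] at hstep'
        exact hstep'
      rw [hstep, hBstep] at hvd
      rcases Finset.mem_union.1 hvd with h1 | h1
      · exact absurd h1 hvd1
      · obtain ⟨-, e, he, hve, u, hue, huB⟩ := Finset.mem_filter.1 h1
        refine ⟨e, u, fun _ => ⟨he, hve, hue, huB, ?_, ?_⟩⟩
        · have huv : u ≠ v := fun h => hvd1 (h ▸ huB)
          have hsub : ({v, u} : Finset V) ⊆ e := by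
            intro x hx
            rcases Finset.mem_insert.1 hx with h | h
            · exact h ▸ hve
            · exact (Finset.mem_singleton.1 h) ▸ hue
          refine (Finset.eq_of_subset_of_card_le hsub ?_).symm
          rw [Finset.card_pair (Ne.symm huv)]
          exact hE₁card e he
        · have h1 : d u ≤ d v - 1 := hdmin u _ huB
          have h2 : d v ≤ d u + 1 := hdmin v _ (hBadj (d u) e he ⟨u, hue, hdmem u ⟨_, huB⟩⟩ v hve)
          omega
    · exact ⟨∅, v₀, fun hc => absurd hc h⟩
  choose pe par hprop using hparex
  -- parents are injective on (B R).erase v₀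
  have hdomain : ∀ u ∈ (Finset.univ : Finset V), True := fun _ _ => trivial
  have hpeinj : ∀ x ∈ ((B R).erase v₀).val, ∀ y ∈ ((B R).erase v₀).val, pe x = pe y → x = y := by
    intro x hx y hy hxy
    rw [Finset.mem_val, Finset.mem_erase] at hx hy
    obtain ⟨-, hx2, -, -, hx5, hx6⟩ := hprop x ⟨hx.2, hx.1⟩
    obtain ⟨-, hy2, -, -, hy5, hy6⟩ := hprop y ⟨hy.2, hy.1⟩
    by_contra hne'
    have hxmem : x ∈ ({y, par y} : Finset V) := by rw [← hy5, ← hxy]; exact hx2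
    have hymem : y ∈ ({x, par x} : Finset V) := by rw [← hx5, hxy]; exact hy2
    have hx' : x = par y := by
      rcases Finset.mem_insert.1 hxmem with h | h
      · exact absurd h hne'
      · exact Finset.mem_singleton.1 h
    have hy' : y = par x := by
      rcases Finset.mem_insert.1 hymem with h | h
      · exact absurd h (Ne.symm hne')
      · exact Finset.mem_singleton.1 h
    rw [← hx'] at hy6
    rw [← hy'] at hx6
    omega
  set P : Multiset (Finset V) := ((B R).erase v₀).val.map pe with hP
  have hPnodup : P.Nodup := Multiset.Nodup.map_on hpeinj ((B R).erase v₀).nodup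
  have hPle : P ≤ E₁ := by
    rw [Multiset.le_iff_subset hPnodup]
    intro x hx
    obtain ⟨u, hu, rfl⟩ := Multiset.mem_map.1 hx
    rw [Finset.mem_val, Finset.mem_erase] at hu
    exact (hprop u ⟨hu.2, hu.1⟩).1
  set X : Multiset (Finset V) := E₁ - P with hX
  have hPX : X + P = E₁ := tsub_add_cancel_of_le hPle
  have hXle : X ≤ E₁ := Multiset.sub_le_self _ _
  set Y : Multiset (Finset V) := X.filter (· ⊆ B R) with hY
  -- spheres
  set Sp : ℕ → Finset V := fun j => Nat.casesOn j {v₀} (fun i => B (i+1) \ B i) with hSp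
  have hSp0 : Sp 0 = {v₀} := rfl
  have hSpsucc : ∀ j, Sp (j+1) = B (j+1) \ B j := fun j => rfl
  have hSpsubB : ∀ j, Sp j ⊆ B j := by
    intro j
    cases j with
    | zero => rw [hSp0, hB0]
    | succ n => rw [hSpsucc]; exact Finset.sdiff_subset
  have hSpd : ∀ j v, v ∈ Sp j → d v = j := by
    intro j v hv
    cases j with
    | zero =>
      rw [hSp0] at hv
      rw [Finset.mem_singleton.1 hv, hd0]
    | succ n =>
      rw [hSpsucc] at hv
      obtain ⟨h1, h2⟩ := Finset.mem_sdiff.1 hv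
      have hle := hdmin v (n+1) h1
      rcases Nat.lt_or_ge (d v) (n+1) with h | h
      · exact absurd (hBmono' (d v) n (by omega) (hdmem v ⟨n+1, h1⟩)) h2
      · omega
  have hSpmem : ∀ j v, v ∈ B (j+1) → d v = j + 1 → v ∈ Sp (j+1) := by
    intro j v hvB hdv
    rw [hSpsucc]
    refine Finset.mem_sdiff.2 ⟨hvB, fun hc => ?_⟩
    have := hdmin v _ hc
    omega
  -- partition sum
  have hpartition : ∀ (g : V → ℕ) (n : ℕ),
      ∑ v ∈ B n, g v = ∑ j ∈ Finset.range (n+1), ∑ v ∈ Sp j, g v := by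
    intro g n
    induction n with
    | zero => simp [hB0, hSp0]
    | succ n ih =>
      have hunion : B (n+1) = B n ∪ Sp (n+1) := by
        rw [hSpsucc]
        rw [Finset.union_sdiff_of_subset (hBmono n)]
      have hdisj : Disjoint (B n) (Sp (n+1)) := by
        rw [hSpsucc]; exact Finset.disjoint_sdiff
      rw [hunion, Finset.sum_union hdisj, ih]
      conv_rhs => rw [Finset.sum_range_succ]
  -- key per-sphere growth
  have hkey : ∀ j, j + 1 ≤ R →
      2 * (Sp j).card ≤ (Sp (j+1)).card + ∑ v ∈ Sp j, X.countP (fun e => v ∈ e) := by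
    intro j hjR
    have hpoint : ∀ v ∈ Sp j,
        2 ≤ ((Sp (j+1)).filter (fun w => par w = v)).card + X.countP (fun e => v ∈ e) := by
      intro v hv
      have hvV' : v ∈ V' := hBV' j (hSpsubB j hv)
      have hdegv : 3 ≤ E₁.countP (fun e => v ∈ e) := hdeg v hvV'
      have hsplitdeg : X.countP (fun e => v ∈ e) + P.countP (fun e => v ∈ e)
          = E₁.countP (fun e => v ∈ e) := by
        rw [← hPX, Multiset.countP_add]
      have hdegP : P.countP (fun e => v ∈ e)
          = (((B R).erase v₀).filter (fun u => v ∈ pe u)).card := by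
        rw [hP, Multiset.countP_map]
        rfl
      have hsubins : ((B R).erase v₀).filter (fun u => v ∈ pe u)
          ⊆ insert v ((Sp (j+1)).filter (fun w => par w = v)) := by
        intro u hu
        obtain ⟨hu1, hu2⟩ := Finset.mem_filter.1 hu
        obtain ⟨hu3, hu4⟩ := Finset.mem_erase.1 hu1
        obtain ⟨-, -, -, -, hpe, hdu⟩ := hprop u ⟨hu4, hu3⟩
        rw [hpe] at hu2
        rcases Finset.mem_insert.1 hu2 with h | h
        · exact Finset.mem_insert.2 (Or.inl h.symm)
        · have hvpar : par u = v := (Finset.mem_singleton.1 h).symm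
          refine Finset.mem_insert.2 (Or.inr (Finset.mem_filter.2 ⟨?_, hvpar⟩))
          have hdv : d v = j := hSpd j v hv
          have hdueq : d u = j + 1 := by rw [← hvpar] at hdv; omega
          exact hSpmem j u (by rw [← hdueq]; exact hdmem u ⟨R, hu4⟩) hdueq
      have hcardins : (((B R).erase v₀).filter (fun u => v ∈ pe u)).card
          ≤ ((Sp (j+1)).filter (fun w => par w = v)).card + 1 := by
        calc (((B R).erase v₀).filter (fun u => v ∈ pe u)).card
            ≤ (insert v ((Sp (j+1)).filter (fun w => par w = v))).card :=
              Finset.card_le_card hsubins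
          _ ≤ _ := Finset.card_insert_le _ _
      omega
    have hsum : ∑ v ∈ Sp j, ((Sp (j+1)).filter (fun w => par w = v)).card
        ≤ (Sp (j+1)).card := by
      have hfib : ((Sp (j+1)).filter (fun w => par w ∈ Sp j)).card
          = ∑ v ∈ Sp j, (((Sp (j+1)).filter (fun w => par w ∈ Sp j)).filter
              (fun w => par w = v)).card := by
        refine Finset.card_eq_sum_card_fiberwise fun w hw => (Finset.mem_filter.1 hw).2
      have heqfib : ∀ v ∈ Sp j, (((Sp (j+1)).filter (fun w => par w ∈ Sp j)).filter
          (fun w => par w = v)).card = ((Sp (j+1)).filter (fun w => par w = v)).card := by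
        intro v hv
        congr 1
        rw [Finset.filter_filter]
        refine Finset.filter_congr fun w hw => ?_
        constructor
        · exact fun h => h.2
        · exact fun h => ⟨h ▸ hv, h⟩
      calc ∑ v ∈ Sp j, ((Sp (j+1)).filter (fun w => par w = v)).card
          = ∑ v ∈ Sp j, (((Sp (j+1)).filter (fun w => par w ∈ Sp j)).filter
              (fun w => par w = v)).card := by
            refine Finset.sum_congr rfl fun v hv => (heqfib v hv).symm
        _ = ((Sp (j+1)).filter (fun w => par w ∈ Sp j)).card := hfib.symm
        _ ≤ (Sp (j+1)).card := Finset.card_filter_le _ _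
    calc 2 * (Sp j).card = ∑ _v ∈ Sp j, 2 := by rw [Finset.sum_const, smul_eq_mul, mul_comm]
      _ ≤ ∑ v ∈ Sp j, (((Sp (j+1)).filter (fun w => par w = v)).card
            + X.countP (fun e => v ∈ e)) := Finset.sum_le_sum hpoint
      _ = ∑ v ∈ Sp j, ((Sp (j+1)).filter (fun w => par w = v)).card
            + ∑ v ∈ Sp j, X.countP (fun e => v ∈ e) := Finset.sum_add_distrib
      _ ≤ _ := by omega
  -- total extra mass over the first R spheres
  have hYcount : Multiset.card Y = X.countP (· ⊆ B R) := by
    rw [hY, Multiset.countP_eq_card_filter]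
  have hcsum : ∑ j ∈ Finset.range R, ∑ v ∈ Sp j, X.countP (fun e => v ∈ e)
      ≤ 2 * Multiset.card Y := by
    have hR1 : R - 1 + 1 = R := by omega
    have h1 : ∑ j ∈ Finset.range R, ∑ v ∈ Sp j, X.countP (fun e => v ∈ e)
        = ∑ v ∈ B (R-1), X.countP (fun e => v ∈ e) := by
      rw [hpartition (fun v => X.countP (fun e => v ∈ e)) (R-1), hR1]
    rw [h1, double_count]
    have h2 : (X.map (fun e => (e ∩ B (R-1)).card)).sum
        ≤ (X.map (fun e => if e ⊆ B R then 2 else 0)).sum := by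
      apply Multiset.sum_map_le_sum_map
      intro e he
      by_cases hsub : e ⊆ B R
      · simp only [if_pos hsub]
        calc (e ∩ B (R-1)).card ≤ e.card := Finset.card_le_card Finset.inter_subset_left
          _ ≤ 2 := hE₁card e (Multiset.mem_of_le hXle he)
      · simp only [if_neg hsub]
        have hempty : e ∩ B (R-1) = ∅ := by
          rw [Finset.eq_empty_iff_forall_notMem]
          intro x hx
          obtain ⟨hx1, hx2⟩ := Finset.mem_inter.1 hx
          refine hsub ?_
          intro w hw
          have := hBadj (R-1) e (Multiset.mem_of_le hXle he) ⟨x, hx1, hx2⟩ w hw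
          rw [hR1] at this
          exact this
        rw [hempty]
        simp
    have h3 : ∀ Z : Multiset (Finset V),
        (Z.map (fun e => if e ⊆ B R then 2 else 0)).sum = 2 * Z.countP (· ⊆ B R) := by
      intro Z
      induction Z using Multiset.induction with
      | empty => simp
      | cons a Z ih =>
        rw [Multiset.map_cons, Multiset.sum_cons, ih, Multiset.countP_cons]
        by_cases h : a ⊆ B R
        · simp only [if_pos h]; ring
        · simp only [if_neg h]; ring
    rw [hYcount]
    calc (X.map (fun e => (e ∩ B (R-1)).card)).sum
        ≤ (X.map (fun e => if e ⊆ B R then 2 else 0)).sum := h2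
      _ = 2 * X.countP (· ⊆ B R) := h3 X
  -- main dichotomy: Y has at least two members
  have hYcard : 2 ≤ Multiset.card Y := by
    by_contra hY1
    push_neg at hY1
    by_cases hexh : ∃ j, j ≤ R ∧ Sp j = ∅
    · -- exhaustion branch
      obtain ⟨j₀, hj₀R, hj₀⟩ := hexh
      have hj₀pos : j₀ ≠ 0 := by
        intro h
        rw [h, hSp0] at hj₀
        simp at hj₀
      obtain ⟨i, rfl⟩ := Nat.exists_eq_succ_of_ne_zero hj₀pos
      have hBeq : B (i+1) = B i := by
        rw [hSpsucc] at hj₀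
        apply Finset.Subset.antisymm _ (hBmono i)
        intro x hx
        by_contra hxB
        have hmem : x ∈ B (i+1) \ B i := Finset.mem_sdiff.2 ⟨hx, hxB⟩
        rw [hj₀] at hmem
        simp at hmem
      set W := B i with hWdef
      have hWR : W ⊆ B R := hBmono' i R (by omega)
      have hWclose : ∀ e ∈ E₁, (∃ u ∈ e, u ∈ W) → e ⊆ W := by
        intro e he hu x hx
        have := hBadj i e he hu x hx
        rw [hBeq] at this
        exact this
      set EW : Multiset (Finset V) := E₁.filter (· ⊆ W) with hEW
      have hEWle : EW ≤ E₁ := Multiset.filter_le _ _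
      have hdegW : ∀ v ∈ W, 3 ≤ EW.countP (fun e => v ∈ e) := by
        intro v hv
        have h3 := hdeg v (hBV' i hv)
        have heq : E₁.filter (fun e => v ∈ e) = E₁.filter (fun e => v ∈ e ∧ e ⊆ W) := by
          refine Multiset.filter_congr fun e he => ?_
          exact ⟨fun hve => ⟨hve, hWclose e he ⟨v, hve, hv⟩⟩, fun h => h.1⟩
        calc 3 ≤ E₁.countP (fun e => v ∈ e) := h3
          _ = Multiset.card (E₁.filter (fun e => v ∈ e)) := by
              rw [Multiset.countP_eq_card_filter]
          _ = Multiset.card (E₁.filter (fun e => v ∈ e ∧ e ⊆ W)) := by rw [heq]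
          _ = E₁.countP (fun e => v ∈ e ∧ e ⊆ W) := by rw [Multiset.countP_eq_card_filter]
          _ = EW.countP (fun e => v ∈ e) := by
              rw [hEW]
              conv_rhs => rw [Multiset.countP_filter]
      have hsum3 : 3 * W.card ≤ 2 * Multiset.card EW := by
        have h1 : 3 * W.card ≤ ∑ v ∈ W, EW.countP (fun e => v ∈ e) := by
          calc 3 * W.card = ∑ _v ∈ W, 3 := by rw [Finset.sum_const, smul_eq_mul, mul_comm]
            _ ≤ _ := Finset.sum_le_sum hdegW
        have h2' := double_count W EW
        have h3' : (EW.map (fun e => (e ∩ W).card)).sum ≤ (EW.map (fun _ => 2)).sum := by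
          apply Multiset.sum_map_le_sum_map
          intro e he
          calc (e ∩ W).card ≤ e.card := Finset.card_le_card Finset.inter_subset_left
            _ ≤ 2 := hE₁card e (Multiset.mem_of_le hEWle he)
        have h4' : (EW.map (fun _ => (2:ℕ))).sum = 2 * Multiset.card EW := by
          rw [Multiset.map_const', Multiset.sum_replicate, smul_eq_mul, mul_comm]
        omega
      have hv₀W : v₀ ∈ W := by
        rw [hWdef]
        exact hBmono' 0 i (Nat.zero_le i) (by rw [hB0]; exact Finset.mem_singleton_self v₀)
      set PW : Multiset (Finset V) := (W.erase v₀).val.map pe with hPW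
      have hPWsub : (W.erase v₀).val ≤ ((B R).erase v₀).val := by
        rw [Finset.val_le_iff]
        exact Finset.erase_subset_erase v₀ hWR
      have hPWle : PW ≤ EW := by
        have hnodup : PW.Nodup := Multiset.Nodup.map_on
          (fun x hx y hy hxy => hpeinj x (Multiset.mem_of_le hPWsub hx) y
            (Multiset.mem_of_le hPWsub hy) hxy) (W.erase v₀).nodup
        rw [Multiset.le_iff_subset hnodup]
        intro x hx
        obtain ⟨u, hu, rfl⟩ := Multiset.mem_map.1 hx
        rw [Finset.mem_val, Finset.mem_erase] at hu
        have huBR : u ∈ B R := hWR hu.2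
        obtain ⟨h1', h2', -, -, -, -⟩ := hprop u ⟨huBR, hu.1⟩
        exact Multiset.mem_filter.2 ⟨h1', hWclose _ h1' ⟨u, h2', hu.2⟩⟩
      have hPWcard : Multiset.card PW = W.card - 1 := by
        rw [hPW, Multiset.card_map, Finset.card_val, Finset.card_erase_of_mem hv₀W]
      set XW : Multiset (Finset V) := EW - PW with hXW
      have hXWcard : 2 ≤ Multiset.card XW := by
        rw [hXW, Multiset.card_sub hPWle, hPWcard]
        have hWpos : 1 ≤ W.card := Finset.card_pos.2 ⟨v₀, hv₀W⟩
        omega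
      have hXWleX : XW ≤ X := by
        rw [Multiset.le_iff_count]
        intro a
        rw [hXW, hX, Multiset.count_sub, Multiset.count_sub]
        by_cases haW : a ⊆ W
        · have h1 : EW.count a = E₁.count a := by
            rw [hEW, Multiset.count_filter, if_pos haW]
          have h2 : PW.count a = P.count a := by
            rw [hPW, hP, Multiset.count_map, Multiset.count_map]
            have hfeq : (W.erase v₀).filter (fun u => a = pe u)
                = ((B R).erase v₀).filter (fun u => a = pe u) := by
              apply Finset.Subset.antisymm
              · exact Finset.filter_subset_filter _ (Finset.erase_subset_erase _ hWR)
              · intro u hu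
                obtain ⟨hu1, hu2⟩ := Finset.mem_filter.1 hu
                obtain ⟨hu3, hu4⟩ := Finset.mem_erase.1 hu1
                obtain ⟨-, h2', -, -, -, -⟩ := hprop u ⟨hu4, hu3⟩
                refine Finset.mem_filter.2 ⟨Finset.mem_erase.2 ⟨hu3, haW (hu2 ▸ h2')⟩, hu2⟩
            have hval := congrArg Finset.val hfeq
            rw [Finset.filter_val, Finset.filter_val] at hval
            rw [hval]
          have h3 : P.count a ≤ E₁.count a := Multiset.count_le_of_le a hPle
          have h4 : PW.count a ≤ EW.count a := Multiset.count_le_of_le a hPWle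
          omega
        · have h1 : EW.count a = 0 := by
            rw [hEW, Multiset.count_filter, if_neg haW]
          have h3 : P.count a ≤ E₁.count a := Multiset.count_le_of_le a hPle
          omega
      have hXWY : XW ≤ Y := by
        rw [hY]
        rw [Multiset.le_filter]
        refine ⟨hXWleX, fun a ha => ?_⟩
        have haEW : a ∈ EW := Multiset.mem_of_le (Multiset.sub_le_self _ _) ha
        have haW : a ⊆ W := (Multiset.mem_filter.1 haEW).2
        exact haW.trans hWR
      have := Multiset.card_le_card hXWY
      omega
    · -- all spheres nonempty: geometric growth contradiction
      push_neg at hexh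
      have hSpne : ∀ j, j ≤ R → 1 ≤ (Sp j).card := fun j hj =>
        Finset.card_pos.2 (hexh j hj)
      set c : ℕ → ℕ := fun j => ∑ v ∈ Sp j, X.countP (fun e => v ∈ e) with hcdef
      have htel : ∀ j, j ≤ R → 2^j ≤ 2^(∑ i ∈ Finset.range j, c i) * (Sp j).card := by
        intro j
        induction j with
        | zero => intro _; simp [hSp0]
        | succ n ih =>
          intro hn
          have h1 := ih (by omega)
          have h2 : 2 * (Sp n).card ≤ 2^(c n) * (Sp (n+1)).card :=
            two_mul_le_pow_mul (hSpne (n+1) hn) (hkey n hn)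
          calc 2^(n+1) = 2 * 2^n := by ring
            _ ≤ 2 * (2^(∑ i ∈ Finset.range n, c i) * (Sp n).card) := Nat.mul_le_mul_left 2 h1
            _ = 2^(∑ i ∈ Finset.range n, c i) * (2 * (Sp n).card) := by ring
            _ ≤ 2^(∑ i ∈ Finset.range n, c i) * (2^(c n) * (Sp (n+1)).card) :=
                Nat.mul_le_mul_left _ h2
            _ = 2^(∑ i ∈ Finset.range (n+1), c i) * (Sp (n+1)).card := by
                rw [Finset.sum_range_succ, pow_add]; ring
      have hcsum2 : ∑ i ∈ Finset.range R, c i ≤ 2 := by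
        calc ∑ i ∈ Finset.range R, c i ≤ 2 * Multiset.card Y := hcsum
          _ ≤ 2 := by omega
      have hSpbig : ∀ j, j ≤ R → 2^j ≤ 4 * (Sp j).card := by
        intro j hj
        have h1 := htel j hj
        have h2 : (2:ℕ)^(∑ i ∈ Finset.range j, c i) ≤ 4 := by
          have hle : ∑ i ∈ Finset.range j, c i ≤ 2 := by
            calc ∑ i ∈ Finset.range j, c i ≤ ∑ i ∈ Finset.range R, c i :=
              Finset.sum_le_sum_of_subset (Finset.range_subset_range.2 hj)
            _ ≤ 2 := hcsum2
          calc (2:ℕ)^(∑ i ∈ Finset.range j, c i) ≤ 2^2 := Nat.pow_le_pow_right (by norm_num) hle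
            _ = 4 := by norm_num
        calc 2^j ≤ 2^(∑ i ∈ Finset.range j, c i) * (Sp j).card := h1
          _ ≤ 4 * (Sp j).card := Nat.mul_le_mul_right _ h2
      have hgeo : ∀ n : ℕ, ∑ j ∈ Finset.range n, 2^j + 1 = 2^n := by
        intro n
        induction n with
        | zero => simp
        | succ kk ih => rw [Finset.sum_range_succ, pow_succ]; omega
      have hcardBR : (B R).card = ∑ j ∈ Finset.range (R+1), (Sp j).card := by
        have := hpartition (fun _ => 1) R
        simpa using this
      have hsumbig : ∑ j ∈ Finset.range (R+1), 2^j ≤ ∑ j ∈ Finset.range (R+1), 4 * (Sp j).card := by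
        refine Finset.sum_le_sum fun j hj => hSpbig j (by
          have := Finset.mem_range.1 hj; omega)
      have hBRcard : (B R).card ≤ Fintype.card V := Finset.card_le_univ _
      have hpow : Fintype.card V + 1 ≤ 2^(L+1) := Nat.lt_pow_succ_log_self (by norm_num) _
      have hfin : (2:ℕ)^(R+1) = 4 * 2^(L+1) := by
        rw [hR]; ring
      rw [← Finset.mul_sum] at hsumbig
      have := hgeo (R+1)
      omega
  -- WIN: build the structure
  have hYX : Y ≤ X := Multiset.filter_le _ _
  obtain ⟨e₁, he₁⟩ : ∃ x, x ∈ Y := Multiset.card_pos_iff_exists_mem.1 (by omega)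
  obtain ⟨Y', hY'⟩ := Multiset.exists_cons_of_mem he₁
  have hY'card : 1 ≤ Multiset.card Y' := by
    have := congrArg Multiset.card hY'
    rw [Multiset.card_cons] at this
    omega
  obtain ⟨e₂, he₂⟩ : ∃ x, x ∈ Y' := Multiset.card_pos_iff_exists_mem.1 (by omega)
  obtain ⟨Y'', hY''⟩ := Multiset.exists_cons_of_mem he₂
  have hpairle : (e₁ ::ₘ e₂ ::ₘ 0) ≤ Y := by
    rw [hY', hY'']
    refine Multiset.cons_le_cons e₁ ?_
    refine Multiset.cons_le_cons e₂ (Multiset.zero_le _)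
  have he₁Y : e₁ ∈ Y := he₁
  have he₂Y : e₂ ∈ Y := hY' ▸ Multiset.mem_cons_of_mem he₂
  have he₁BR : e₁ ⊆ B R := (Multiset.mem_filter.1 he₁Y).2
  have he₂BR : e₂ ⊆ B R := (Multiset.mem_filter.1 he₂Y).2
  have he₁E₁ : e₁ ∈ E₁ := Multiset.mem_of_le hXle ((Multiset.mem_filter.1 he₁Y).1)
  -- chains
  set Ch : ℕ → V → Finset V :=
    fun f => Nat.rec (fun v => {v}) (fun _ ih v => if v = v₀ then {v₀} else insert v (ih (par v))) f
    with hCh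
  have hCh0 : ∀ v, Ch 0 v = {v} := fun v => rfl
  have hChsucc : ∀ f v, Ch (f+1) v = if v = v₀ then {v₀} else insert v (Ch f (par v)) :=
    fun f v => rfl
  have hChinv : ∀ f v, v ∈ B R → d v ≤ f →
      (v ∈ Ch f v ∧ v₀ ∈ Ch f v ∧ Ch f v ⊆ B R ∧ (Ch f v).card ≤ d v + 1 ∧
        (∀ u ∈ Ch f v, u ≠ v₀ → (u ∈ B R ∧ par u ∈ Ch f v))) := by
    intro f
    induction f with
    | zero =>
      intro v hv hd'
      have hv0 : v = v₀ := hdzero v ⟨R, hv⟩ (by omega)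
      subst hv0
      rw [hCh0]
      refine ⟨Finset.mem_singleton_self v, Finset.mem_singleton_self v, ?_, by simp, ?_⟩
      · intro x hx; rw [Finset.mem_singleton.1 hx]; exact hv
      · intro u hu hu0
        exact absurd (Finset.mem_singleton.1 hu) hu0
    | succ n ih =>
      intro v hv hd'
      by_cases hveq : v = v₀
      · rw [hChsucc, if_pos hveq]
        refine ⟨?_, Finset.mem_singleton_self v₀, ?_, ?_, ?_⟩
        · rw [hveq]; exact Finset.mem_singleton_self v₀
        · intro x hx
          rw [Finset.mem_singleton.1 hx, ← hveq]
          exact hv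
        · simp
        · intro u hu hu0
          exact absurd (Finset.mem_singleton.1 hu) hu0
      · rw [hChsucc, if_neg hveq]
        obtain ⟨-, -, -, hpB, -, hdpar⟩ := hprop v ⟨hv, hveq⟩
        have hdvpos : 0 < d v := by omega
        have hparBR : par v ∈ B R := hBmono' (d v - 1) R (by
          have := hdmin v R hv
          omega) hpB
        have hdparle : d (par v) ≤ n := by omega
        obtain ⟨ih1, ih2, ih3, ih4, ih5⟩ := ih (par v) hparBR hdparle
        refine ⟨Finset.mem_insert_self _ _, Finset.mem_insert_of_mem ih2, ?_, ?_, ?_⟩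
        · intro x hx
          rcases Finset.mem_insert.1 hx with h | h
          · rw [h]; exact hv
          · exact ih3 h
        · calc (insert v (Ch n (par v))).card ≤ (Ch n (par v)).card + 1 :=
              Finset.card_insert_le _ _
            _ ≤ d (par v) + 1 + 1 := by omega
            _ ≤ d v + 1 := by omega
        · intro u hu hu0
          rcases Finset.mem_insert.1 hu with h | h
          · subst h
            exact ⟨hv, Finset.mem_insert_of_mem ih1⟩
          · obtain ⟨g1, g2⟩ := ih5 u h hu0
            exact ⟨g1, Finset.mem_insert_of_mem g2⟩
  -- the structure
  set U : Finset V := (e₁ ∪ e₂).biUnion (Ch R) with hU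
  have hwBR : ∀ w ∈ e₁ ∪ e₂, w ∈ B R := by
    intro w hw
    rcases Finset.mem_union.1 hw with h | h
    · exact he₁BR h
    · exact he₂BR h
  have hwd : ∀ w ∈ e₁ ∪ e₂, d w ≤ R := fun w hw => hdmin w R (hwBR w hw)
  have he₁ne : e₁.Nonempty := hE₁ne e₁ he₁E₁
  obtain ⟨w₁, hw₁⟩ := he₁ne
  have hw₁u : w₁ ∈ e₁ ∪ e₂ := Finset.mem_union_left _ hw₁
  have hv₀U : v₀ ∈ U := by
    rw [hU]
    refine Finset.mem_biUnion.2 ⟨w₁, hw₁u, ?_⟩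
    exact (hChinv R w₁ (hwBR w₁ hw₁u) (hwd w₁ hw₁u)).2.1
  have hUBR : U ⊆ B R := by
    rw [hU]
    intro x hx
    obtain ⟨w, hw, hxw⟩ := Finset.mem_biUnion.1 hx
    exact (hChinv R w (hwBR w hw) (hwd w hw)).2.2.1 hxw
  have hUclosed : ∀ u ∈ U, u ≠ v₀ → par u ∈ U := by
    intro u hu hu0
    rw [hU] at hu ⊢
    obtain ⟨w, hw, hxw⟩ := Finset.mem_biUnion.1 hu
    refine Finset.mem_biUnion.2 ⟨w, hw, ?_⟩
    exact ((hChinv R w (hwBR w hw) (hwd w hw)).2.2.2.2 u hxw hu0).2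
  have hUself : ∀ w ∈ e₁ ∪ e₂, w ∈ U := by
    intro w hw
    rw [hU]
    exact Finset.mem_biUnion.2 ⟨w, hw, (hChinv R w (hwBR w hw) (hwd w hw)).1⟩
  have hUcard : U.card ≤ 4 * R + 1 := by
    have hsub : U ⊆ insert v₀ ((e₁ ∪ e₂).biUnion (fun w => (Ch R w).erase v₀)) := by
      intro x hx
      by_cases hx0 : x = v₀
      · rw [hx0]; exact Finset.mem_insert_self _ _
      · rw [hU] at hx
        obtain ⟨w, hw, hxw⟩ := Finset.mem_biUnion.1 hx
        exact Finset.mem_insert_of_mem (Finset.mem_biUnion.2 ⟨w, hw,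
          Finset.mem_erase.2 ⟨hx0, hxw⟩⟩)
    calc U.card ≤ (insert v₀ ((e₁ ∪ e₂).biUnion (fun w => (Ch R w).erase v₀))).card :=
          Finset.card_le_card hsub
      _ ≤ ((e₁ ∪ e₂).biUnion (fun w => (Ch R w).erase v₀)).card + 1 := Finset.card_insert_le _ _
      _ ≤ (∑ w ∈ e₁ ∪ e₂, ((Ch R w).erase v₀).card) + 1 := by
          have := Finset.card_biUnion_le (s := e₁ ∪ e₂) (t := fun w => (Ch R w).erase v₀)
          omega
      _ ≤ (∑ _w ∈ e₁ ∪ e₂, R) + 1 := by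
          have hbound : ∀ w ∈ e₁ ∪ e₂, ((Ch R w).erase v₀).card ≤ R := by
            intro w hw
            have hinv := hChinv R w (hwBR w hw) (hwd w hw)
            have h1 : ((Ch R w).erase v₀).card = (Ch R w).card - 1 :=
              Finset.card_erase_of_mem hinv.2.1
            have h2 := hinv.2.2.2.1
            have h3 := hwd w hw
            omega
          have := Finset.sum_le_sum hbound
          omega
      _ ≤ 4 * R + 1 := by
          rw [Finset.sum_const, smul_eq_mul]
          have hcard4 : (e₁ ∪ e₂).card ≤ 4 := by
            calc (e₁ ∪ e₂).card ≤ e₁.card + e₂.card := Finset.card_union_le _ _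
              _ ≤ 4 := by
                have h1 : e₁.card ≤ 2 := hE₁card e₁ he₁E₁
                have h2 : e₂.card ≤ 2 := hE₁card e₂
                  (Multiset.mem_of_le hXle ((Multiset.mem_filter.1 he₂Y).1))
                omega
          have : (e₁ ∪ e₂).card * R ≤ 4 * R := Nat.mul_le_mul_right R hcard4
          omega
  set PU : Multiset (Finset V) := (U.erase v₀).val.map pe with hPU
  have hPUle : PU ≤ P := by
    rw [hPU, hP]
    apply Multiset.map_le_map
    rw [Finset.val_le_iff]
    exact Finset.erase_subset_erase v₀ hUBR
  set F : Multiset (Finset V) := PU + (e₁ ::ₘ e₂ ::ₘ 0) with hF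
  have hFle : F ≤ E := by
    have h1 : F ≤ P + X := by
      rw [hF]
      exact add_le_add hPUle (hpairle.trans hYX)
    have h2 : P + X = E₁ := by rw [add_comm]; exact hPX
    calc F ≤ P + X := h1
      _ = E₁ := h2
      _ ≤ E := hE₁le
  have hFsub : ∀ f ∈ F, f ⊆ U := by
    intro f hf
    rw [hF] at hf
    rcases Multiset.mem_add.1 hf with h | h
    · obtain ⟨u, hu, rfl⟩ := Multiset.mem_map.1 h
      rw [Finset.mem_val, Finset.mem_erase] at hu
      have huU : u ∈ U := hu.2
      have huBR : u ∈ B R := hUBR huU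
      obtain ⟨-, -, -, -, hpe, -⟩ := hprop u ⟨huBR, hu.1⟩
      rw [hpe]
      intro x hx
      rcases Finset.mem_insert.1 hx with h' | h'
      · rw [h']; exact huU
      · rw [Finset.mem_singleton.1 h']
        exact hUclosed u huU hu.1
    · have hor : f = e₁ ∨ f = e₂ := by
        rcases Multiset.mem_cons.1 h with h' | h'
        · exact Or.inl h'
        · rcases Multiset.mem_cons.1 h' with h'' | h''
          · exact Or.inr h''
          · simp at h''
      rcases hor with rfl | rfl
      · intro x hx; exact hUself x (Finset.mem_union_left _ hx)
      · intro x hx; exact hUself x (Finset.mem_union_right _ hx)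
  have hFcard : Multiset.card F = U.card + 1 := by
    rw [hF, Multiset.card_add, hPU, Multiset.card_map, Finset.card_val,
      Finset.card_erase_of_mem hv₀U]
    have hUpos : 1 ≤ U.card := Finset.card_pos.2 ⟨v₀, hv₀U⟩
    simp only [Multiset.card_cons, Multiset.card_zero]
    omega
  exact ⟨U, F, hFle, hFsub, hFcard, by omega⟩

omit [Fintype V] in
lemma card_le_filterempty_add_sizes (Z : Multiset (Finset V)) :
    Multiset.card Z ≤ Multiset.card (Z.filter (· = ∅)) + (Z.map Finset.card).sum := by
  induction Z using Multiset.induction with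
  | empty => simp
  | cons a Z ih =>
    rw [Multiset.card_cons, Multiset.map_cons, Multiset.sum_cons, Multiset.filter_cons]
    by_cases h : a = ∅
    · simp only [if_pos h]
      rw [Multiset.card_add, Multiset.card_singleton]
      omega
    · simp only [if_neg h]
      have : 1 ≤ a.card := Finset.card_pos.2 (Finset.nonempty_iff_ne_empty.2 h)
      rw [Multiset.card_add, Multiset.card_zero]
      omega

omit [Fintype V] in
lemma sum_inter_le (t : ℕ) (R : Finset V) (Z : Multiset (Finset V)) (h : ∀ e ∈ Z, e.card ≤ t) :
    (Z.map (fun e => (e ∩ R).card)).sum ≤ t * Z.countP (fun e => (e ∩ R).Nonempty) := by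
  induction Z using Multiset.induction with
  | empty => simp
  | cons a Z ih =>
    rw [Multiset.map_cons, Multiset.sum_cons, Multiset.countP_cons]
    have hZ := ih (fun e he => h e (Multiset.mem_cons_of_mem he))
    by_cases hne : (a ∩ R).Nonempty
    · simp only [if_pos hne]
      have h1 : (a ∩ R).card ≤ t :=
        le_trans (Finset.card_le_card Finset.inter_subset_left) (h a (Multiset.mem_cons_self a Z))
      rw [Nat.mul_add, Nat.mul_one]
      omega
    · have : a ∩ R = ∅ := Finset.not_nonempty_iff_eq_empty.1 hne
      simp only [if_neg hne, this]
      simpa using hZ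

lemma eleven_pow (n : ℕ) : 3 * (n + 3) ≤ 11 * 2^n := by
  induction n with
  | zero => norm_num
  | succ k ih =>
    have h1 : (2:ℕ)^(k+1) = 2 * 2^k := by rw [pow_succ]; ring
    have h2 : 1 ≤ (2:ℕ)^k := Nat.one_le_two_pow
    omega

lemma extract : ∀ (nst : ℕ) (E : Multiset (Finset V)),
    (∀ e ∈ E, e.card ≤ 2) →
    2 * Fintype.card V + 1 + nst * (4 * Nat.log 2 (Fintype.card V) + 10) ≤ Multiset.card E →
    ∃ (S : Finset V) (F : Multiset (Finset V)), F ≤ E ∧ (∀ f ∈ F, f ⊆ S) ∧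
      S.card + nst ≤ Multiset.card F ∧ S.card ≤ nst * (4 * Nat.log 2 (Fintype.card V) + 9) := by
  intro nst
  induction nst with
  | zero =>
    intro E hE hm
    exact ⟨∅, 0, Multiset.zero_le _, by simp, by simp, by simp⟩
  | succ n ih =>
    intro E hE hm
    set L := Nat.log 2 (Fintype.card V) with hLdef
    have hmul : (n+1) * (4*L+10) = n * (4*L+10) + (4*L+10) := Nat.succ_mul n _
    obtain ⟨U, F₁, hF₁le, hF₁sub, hF₁card, hUcard⟩ := lemG E hE (by omega)
    have hF₁cardle : Multiset.card F₁ ≤ 4*L + 10 := by omega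
    have hcard2 : 2 * Fintype.card V + 1 + n * (4*L+10) ≤ Multiset.card (E - F₁) := by
      rw [Multiset.card_sub hF₁le]
      have := Multiset.card_le_card hF₁le
      omega
    obtain ⟨S₂, F₂, hF₂le, hF₂sub, hF₂card, hS₂card⟩ := ih (E - F₁)
      (fun e he => hE e (Multiset.mem_of_le (Multiset.sub_le_self _ _) he)) hcard2
    refine ⟨U ∪ S₂, F₁ + F₂, ?_, ?_, ?_, ?_⟩
    · have h1 : F₂ + F₁ ≤ E := (le_tsub_iff_right hF₁le).1 hF₂le
      rw [add_comm]
      exact h1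
    · intro f hf
      rcases Multiset.mem_add.1 hf with h | h
      · exact (hF₁sub f h).trans Finset.subset_union_left
      · exact (hF₂sub f h).trans Finset.subset_union_right
    · rw [Multiset.card_add]
      have hcu : (U ∪ S₂).card ≤ U.card + S₂.card := Finset.card_union_le _ _
      omega
    · have hcu : (U ∪ S₂).card ≤ U.card + S₂.card := Finset.card_union_le _ _
      have hmul2 : (n+1) * (4*L+9) = n * (4*L+9) + (4*L+9) := Nat.succ_mul n _
      omega

set_option maxHeartbeats 1000000 in
lemma main_ind : ∀ (n : ℕ) (E : Multiset (Finset V)) (Q : ℕ),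
    (∀ e ∈ E, e.card ≤ n + 2) → 2 ≤ Q →
    2^n * Q * (4 * Nat.log 2 (Fintype.card V) + 10) + 1 ≤ Fintype.card V →
    3 * (Fintype.card V : ℝ) * ((4 * (Fintype.card V : ℝ)) / (Q : ℝ))^n ≤ (Multiset.card E : ℝ) →
    ∃ S : Finset V, S.card ≤ 2^n * Q * (4 * Nat.log 2 (Fintype.card V) + 9) + (2^n - 1) * Q ∧
      S.card + Q ≤ Multiset.card (E.filter (fun e => e ⊆ S)) := by
  intro n
  induction n with
  | zero =>
    intro E Q hcard hQ2 hside hm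
    have hside' : Q * (4 * Nat.log 2 (Fintype.card V) + 10) + 1 ≤ Fintype.card V := by
      simpa using hside
    have hmn : 3 * Fintype.card V ≤ Multiset.card E := by
      have h0 : ((3 * Fintype.card V : ℕ) : ℝ) ≤ (Multiset.card E : ℝ) := by
        push_cast
        simpa using hm
      exact_mod_cast h0
    obtain ⟨S, F, hFle, hFsub, hFcard, hScard⟩ := extract Q E hcard (by omega)
    refine ⟨S, by simpa using hScard, ?_⟩
    have hle : F ≤ E.filter (fun e => e ⊆ S) := Multiset.le_filter.2 ⟨hFle, hFsub⟩
    have := Multiset.card_le_card hle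
    omega
  | succ n ih =>
    intro E Q hcard hQ2 hside hm
    by_cases hz : Q ≤ Multiset.card (E.filter (· = ∅))
    · refine ⟨∅, Nat.zero_le _, ?_⟩
      have heq : E.filter (fun e => e ⊆ (∅ : Finset V)) = E.filter (· = ∅) := by
        refine Multiset.filter_congr fun e he => ?_
        exact ⟨fun h => Finset.subset_empty.1 h, fun h => Finset.subset_empty.2 h⟩
      rw [Finset.card_empty, heq]
      omega
    · push_neg at hz
      have hQpos : 0 < Q := by omega
      have hQs : Q + 1 ≤ Fintype.card V := by
        have h1 : Q ≤ Q * (4 * Nat.log 2 (Fintype.card V) + 10) :=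
          Nat.le_mul_of_pos_right Q (by omega)
        have h2 : Q * (4 * Nat.log 2 (Fintype.card V) + 10)
            ≤ 2^(n+1) * Q * (4 * Nat.log 2 (Fintype.card V) + 10) := by
          have h3 : 1 ≤ 2^(n+1) := Nat.one_le_two_pow
          calc Q * (4 * Nat.log 2 (Fintype.card V) + 10)
              = 1 * (Q * (4 * Nat.log 2 (Fintype.card V) + 10)) := (one_mul _).symm
            _ ≤ 2^(n+1) * (Q * (4 * Nat.log 2 (Fintype.card V) + 10)) :=
                Nat.mul_le_mul_right _ h3
            _ = 2^(n+1) * Q * (4 * Nat.log 2 (Fintype.card V) + 10) := by ring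
        omega
      set b : V → ℕ := fun v => E.countP (fun e => v ∈ e) with hbdef
      obtain ⟨R, hRcard, hRtop⟩ := exists_top b Q (by omega)
      set E'' : Multiset (Finset V) :=
        (E.filter (fun e => (e ∩ R).Nonempty)).map (fun e => e \ R) with hE''def
      have hsumuniv : ∑ v, b v = (E.map (fun e => (e ∩ Finset.univ).card)).sum :=
        double_count Finset.univ E
      have hsumR : ∑ v ∈ R, b v = (E.map (fun e => (e ∩ R).card)).sum := double_count R E
      have hErest : (E.map (fun e => (e ∩ R).card)).sum ≤ (n+3) * Multiset.card E'' := by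
        rw [hE''def, Multiset.card_map, ← Multiset.countP_eq_card_filter]
        exact sum_inter_le (n+3) R E (fun e he => hcard e he)
      have hEuniv : Multiset.card E ≤ Multiset.card (E.filter (· = ∅)) + ∑ v, b v := by
        rw [hsumuniv]
        have heq : (E.map (fun e => (e ∩ Finset.univ).card)) = E.map Finset.card :=
          Multiset.map_congr rfl (fun e he => by rw [Finset.inter_univ])
        rw [heq]
        exact card_le_filterempty_add_sizes E
      have hcard'' : ∀ f ∈ E'', f.card ≤ n + 2 := by
        intro f hf
        rw [hE''def] at hf
        obtain ⟨e, he, rfl⟩ := Multiset.mem_map.1 hf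
        have he1 : e ∈ E := Multiset.mem_of_mem_filter he
        have hne : (e ∩ R).Nonempty := (Multiset.mem_filter.1 he).2
        have h1 : (e \ R).card + (e ∩ R).card = e.card := Finset.card_sdiff_add_card_inter e R
        have h2 : 1 ≤ (e ∩ R).card := Finset.card_pos.2 hne
        have h3 := hcard e he1
        omega
      -- basic real facts
      have hspos : 0 < Fintype.card V := by omega
      have hsR : (0:ℝ) < (Fintype.card V : ℝ) := by exact_mod_cast hspos
      have hQR : (0:ℝ) < (Q:ℝ) := by exact_mod_cast hQpos
      set sR : ℝ := (Fintype.card V : ℝ) with hsRdef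
      set QR : ℝ := (Q : ℝ) with hQRdef
      set x : ℝ := 4 * sR / QR with hxdef
      have hxpos : 0 ≤ x := by positivity
      have hx4 : (4:ℝ) ≤ x := by
        rw [hxdef, le_div_iff₀ hQR]
        have h1 : (Q:ℝ) ≤ (Fintype.card V : ℝ) := by exact_mod_cast (by omega : Q ≤ Fintype.card V)
        nlinarith
      have hm12 : 12 * Q ≤ Multiset.card E := by
        have hp : (4:ℝ) ≤ x^(n+1) := by
          calc (4:ℝ) = 4^1 := (pow_one 4).symm
            _ ≤ 4^(n+1) := by
                apply pow_le_pow_right₀ (by norm_num)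
                omega
            _ ≤ x^(n+1) := pow_le_pow_left₀ (by norm_num) hx4 _
        have h12s : 12 * sR ≤ (Multiset.card E : ℝ) := by
          calc 12 * sR = 3 * sR * 4 := by ring
            _ ≤ 3 * sR * x^(n+1) := by nlinarith
            _ ≤ _ := hm
        rw [hsRdef] at h12s
        have h12s' : 12 * Fintype.card V ≤ Multiset.card E := by exact_mod_cast h12s
        have := hQs
        omega
      -- the key nat inequality
      have hc4 : Q * Multiset.card E ≤ Q*Q + Fintype.card V * ((n+3) * Multiset.card E'') := by
        have c2 : ∑ v ∈ R, b v ≤ (n+3) * Multiset.card E'' := by rw [hsumR]; exact hErest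
        have c3 : Q * Multiset.card E ≤ Q * ((Q - 1) + ∑ v, b v) := by
          apply Nat.mul_le_mul_left
          omega
        have c5 : Q * ((Q-1) + ∑ v, b v) = Q * (Q-1) + Q * ∑ v, b v := by ring
        have c6 : Q * ∑ v, b v ≤ Fintype.card V * ∑ v ∈ R, b v := hRtop
        have c7 : Fintype.card V * ∑ v ∈ R, b v ≤ Fintype.card V * ((n+3) * Multiset.card E'') :=
          Nat.mul_le_mul_left _ c2
        have c8 : Q * (Q-1) ≤ Q * Q := Nat.mul_le_mul_left _ (by omega)
        omega
      -- real chain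
      have hmain : 3 * sR * ((4 * sR) / ((2*Q : ℕ):ℝ))^n ≤ (Multiset.card E'' : ℝ) := by
        set mR : ℝ := (Multiset.card E : ℝ) with hmRdef
        set m2R : ℝ := (Multiset.card E'' : ℝ) with hm2Rdef
        have hkey1 : QR * mR ≤ QR*QR + sR*(((n:ℝ)+3)*m2R) := by
          rw [hmRdef, hm2Rdef, hsRdef, hQRdef]
          exact_mod_cast hc4
        have h12 : 12 * QR ≤ mR := by
          rw [hmRdef, hQRdef]
          exact_mod_cast hm12
        have hQ2'' : QR * (12 * QR) ≤ QR * mR := mul_le_mul_of_nonneg_left h12 (le_of_lt hQR)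
        have hQ2' : 12 * (QR * QR) ≤ QR * mR := by
          calc 12 * (QR * QR) = QR * (12 * QR) := by ring
            _ ≤ QR * mR := hQ2''
        have hstep1 : 11 * (QR * mR) ≤ 12 * (sR * (((n:ℝ)+3)*m2R)) := by linarith
        have hm' : 3 * sR * x^(n+1) ≤ mR := hm
        have hstep2 : QR * (3 * sR * x^(n+1)) ≤ QR * mR :=
          mul_le_mul_of_nonneg_left hm' (le_of_lt hQR)
        have hQx : QR * x = 4 * sR := by
          rw [hxdef]
          field_simp
        have hlhs : 11 * (QR * (3 * sR * x^(n+1))) = 12 * sR * (11 * sR * x^n) := by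
          have hxp : x^(n+1) = x * x^n := by rw [pow_succ]; ring
          rw [hxp]
          calc 11 * (QR * (3 * sR * (x * x^n))) = 33 * sR * (QR * x) * x^n := by ring
            _ = 33 * sR * (4 * sR) * x^n := by rw [hQx]
            _ = 12 * sR * (11 * sR * x^n) := by ring
        have hstep3 : 12 * sR * (11 * sR * x^n) ≤ 12 * sR * (((n:ℝ)+3)*m2R) := by
          have h1 : 11 * (QR * (3 * sR * x^(n+1))) ≤ 12 * (sR * (((n:ℝ)+3)*m2R)) := by
            linarith
          rw [hlhs] at h1
          linarith
        have hstep4 : 11 * sR * x^n ≤ ((n:ℝ)+3) * m2R := by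
          have h12s : (0:ℝ) < 12 * sR := by linarith
          exact (mul_le_mul_iff_right₀ h12s).1 hstep3
        -- switch to y
        set y : ℝ := (4 * sR) / ((2*Q : ℕ):ℝ) with hydef
        have h2Q : ((2*Q : ℕ):ℝ) = 2 * QR := by
          rw [hQRdef]; push_cast; ring
        have hxy : x = 2 * y := by
          rw [hxdef, hydef, h2Q]
          field_simp
        have hypos : 0 ≤ y := by
          rw [hydef, h2Q]
          positivity
        have hxn : x^n = 2^n * y^n := by
          rw [hxy, mul_pow]
        have h11 : 3 * ((n:ℝ)+3) ≤ 11 * 2^n := by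
          have := eleven_pow n
          have hcast : ((3 * (n + 3) : ℕ):ℝ) ≤ ((11 * 2^n : ℕ):ℝ) := by exact_mod_cast this
          push_cast at hcast
          linarith
        have hstep5 : ((n:ℝ)+3) * (3 * sR * y^n) ≤ ((n:ℝ)+3) * m2R := by
          have hy' : 0 ≤ sR * y^n := by positivity
          calc ((n:ℝ)+3) * (3 * sR * y^n) = (3 * ((n:ℝ)+3)) * (sR * y^n) := by ring
            _ ≤ (11 * 2^n) * (sR * y^n) := mul_le_mul_of_nonneg_right h11 hy'
            _ = 11 * sR * x^n := by rw [hxn]; ring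
            _ ≤ ((n:ℝ)+3) * m2R := hstep4
        have hn3 : (0:ℝ) < (n:ℝ)+3 := by positivity
        have := (mul_le_mul_iff_right₀ hn3).1 hstep5
        rw [hydef] at this
        exact this
      -- apply induction hypothesis
      have hside'' : 2^n * (2*Q) * (4 * Nat.log 2 (Fintype.card V) + 10) + 1 ≤ Fintype.card V := by
        have heq : 2^n * (2*Q) * (4 * Nat.log 2 (Fintype.card V) + 10)
            = 2^(n+1) * Q * (4 * Nat.log 2 (Fintype.card V) + 10) := by ring
        omega
      rw [hsRdef] at hmain
      have hmain2 : 3 * ((Fintype.card V : ℕ):ℝ)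
          * ((4 * ((Fintype.card V : ℕ):ℝ)) / ((2*Q : ℕ):ℝ))^n ≤ (Multiset.card E'' : ℝ) := hmain
      obtain ⟨S', hS'card, hS'span⟩ := ih E'' (2*Q) hcard'' (by omega) hside'' hmain2
      have htrans : Multiset.card (E''.filter (fun e => e ⊆ S'))
          ≤ Multiset.card (E.filter (fun e => e ⊆ S' ∪ R)) := by
        rw [hE''def, Multiset.filter_map, Multiset.card_map]
        apply Multiset.card_le_card
        rw [Multiset.le_filter]
        constructor
        · exact (Multiset.filter_le _ _).trans (Multiset.filter_le _ _)
        · intro a ha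
          have h1 : a \ R ⊆ S' := (Multiset.mem_filter.1 ha).2
          intro xx hxx
          by_cases hxR : xx ∈ R
          · exact Finset.mem_union_right _ hxR
          · exact Finset.mem_union_left _ (h1 (Finset.mem_sdiff.2 ⟨hxx, hxR⟩))
      refine ⟨S' ∪ R, ?_, ?_⟩
      · have hcu : (S' ∪ R).card ≤ S'.card + Q := by
          have := Finset.card_union_le S' R
          omega
        have h1 : 1 ≤ 2^n := Nat.one_le_two_pow
        obtain ⟨k, hk⟩ : ∃ k, 2^n = k + 1 := ⟨2^n - 1, by omega⟩
        have heqA : 2^n * (2*Q) * (4 * Nat.log 2 (Fintype.card V) + 9)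
            = 2^(n+1) * Q * (4 * Nat.log 2 (Fintype.card V) + 9) := by ring
        have heqB : (2^n - 1) * (2*Q) + Q = (2^(n+1) - 1) * Q := by
          rw [hk]
          have : 2^(n+1) = 2*(k+1) := by rw [pow_succ, hk]; ring
          rw [this]
          simp only [Nat.add_sub_cancel]
          have h2 : 2*(k+1) - 1 = 2*k+1 := by omega
          rw [h2]
          ring
        omega
      · have hcu : (S' ∪ R).card ≤ S'.card + Q := by
          have := Finset.card_union_le S' R
          omega
        omega

end Stmt1Aux

set_option maxHeartbeats 1000000 in
/-- Let `t ≥ 3` and let `G` be a `t`-hypergraph (every hyperedge has at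
most `t` vertices, parallel hyperedges allowed) with `s ≥ 2` vertices and `m` hyperedges.
If `2^{t+2}·log₂ s ≤ k ≤ s` and `m ≥ 3s·((2^{t+3}·s·log₂ s)/k)^{t-2}`, then some vertex
set `S` with `|S| ≤ k` spans at least `|S| + k/(2^{t+1}·log₂ s)` hyperedges. -/
theorem stmt_1 (V : Type*) [Fintype V] (t : ℕ) (ht : 3 ≤ t)
    (E : Multiset (Finset V)) (s m k : ℕ)
    (hs : Fintype.card V = s) (hs2 : 2 ≤ s)
    (hE : ∀ e ∈ E, e.card ≤ t)
    (hm : Multiset.card E = m)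
    (hk1 : (2 : ℝ) ^ (t + 2) * Real.logb 2 s ≤ (k : ℝ)) (hk2 : k ≤ s)
    (hmlb : (m : ℝ) ≥ 3 * s * ((2 ^ (t + 3) * s * Real.logb 2 s) / k) ^ (t - 2)) :
    ∃ S : Finset V, S.card ≤ k ∧
      (S.card : ℝ) + (k : ℝ) / (2 ^ (t + 1) * Real.logb 2 s) ≤
        (Multiset.card (E.filter (fun e => e ⊆ S)) : ℝ) := by
  classical
  subst hs hm
  set s := Fintype.card V with hsdef
  -- basic positivity
  have hsR : (0:ℝ) < (s:ℝ) := by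
    have : 0 < s := by omega
    exact_mod_cast this
  have hs1R : (1:ℝ) < (s:ℝ) := by exact_mod_cast hs2
  have hlogpos : (0:ℝ) < Real.logb 2 s := Real.logb_pos (by norm_num) hs1R
  -- generic: 2^c ≤ s (in ℕ) gives c ≤ logb 2 s
  have hlogge : ∀ c : ℕ, (2:ℕ)^c ≤ s → ((c:ℕ):ℝ) ≤ Real.logb 2 s := by
    intro c hc
    rw [Real.le_logb_iff_rpow_le (by norm_num) hsR]
    rw [Real.rpow_natCast]
    exact_mod_cast hc
  -- k is at least 32·logb
  have hk32 : (32:ℝ) * Real.logb 2 s ≤ (k:ℝ) := by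
    have h1 : (32:ℝ) ≤ 2^(t+2) := by
      calc (32:ℝ) = 2^5 := by norm_num
        _ ≤ 2^(t+2) := pow_le_pow_right₀ (by norm_num) (by omega)
    calc (32:ℝ) * Real.logb 2 s ≤ 2^(t+2) * Real.logb 2 s :=
        mul_le_mul_of_nonneg_right h1 (le_of_lt hlogpos)
      _ ≤ (k:ℝ) := hk1
  -- bootstrap s ≥ 224
  have hk32n : 32 ≤ k := by
    have h1 : (32:ℝ) ≤ (k:ℝ) := by
      have h2 : (1:ℝ) ≤ Real.logb 2 s := by
        have := hlogge 1 (by omega)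
        simpa using this
      nlinarith
    exact_mod_cast h1
  have hs32 : 32 ≤ s := le_trans hk32n hk2
  have hk160 : 160 ≤ k := by
    have h2 : (5:ℝ) ≤ Real.logb 2 s := by
      have := hlogge 5 (by norm_num; omega)
      simpa using this
    have h1 : (160:ℝ) ≤ (k:ℝ) := by nlinarith
    exact_mod_cast h1
  have hs160 : 160 ≤ s := le_trans hk160 hk2
  have hk224 : 224 ≤ k := by
    have h2 : (7:ℝ) ≤ Real.logb 2 s := by
      have := hlogge 7 (by norm_num; omega)
      simpa using this
    have h1 : (224:ℝ) ≤ (k:ℝ) := by nlinarith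
    exact_mod_cast h1
  have hs224 : 224 ≤ s := le_trans hk224 hk2
  set L := Nat.log 2 s with hLdef
  have hL7 : 7 ≤ L := (Nat.le_log_iff_pow_le (by norm_num) (by omega)).2 (by norm_num; omega)
  have hlogL : ((L:ℕ):ℝ) ≤ Real.logb 2 s := hlogge L (Nat.pow_log_le_self 2 (by omega))
  -- the budget bound  (4L+10) ≤ (21/4)·logb 2 s
  have hbound : ((4*L+10 : ℕ):ℝ) ≤ (21/4) * Real.logb 2 s := by
    by_cases hbig : 256 ≤ s
    · have hL8 : 8 ≤ L := (Nat.le_log_iff_pow_le (by norm_num) (by omega)).2 (by norm_num; omega)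
      have h1 : ((4*L+10 : ℕ):ℝ) ≤ (21/4) * ((L:ℕ):ℝ) := by
        have : (16*(4*L+10) : ℕ) ≤ 84 * L := by omega
        have hcast : ((16*(4*L+10) : ℕ):ℝ) ≤ ((84 * L : ℕ):ℝ) := by exact_mod_cast this
        push_cast at hcast ⊢
        linarith
      calc ((4*L+10 : ℕ):ℝ) ≤ (21/4) * ((L:ℕ):ℝ) := h1
        _ ≤ (21/4) * Real.logb 2 s := by
            have := hlogL
            nlinarith
    · -- 224 ≤ s ≤ 255 : L = 7 and logb ≥ 31/4
      have hL7' : L = 7 := Nat.log_eq_of_pow_le_of_lt_pow (by norm_num; omega) (by norm_num; omega)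
      have hlog314 : (31/4 : ℝ) ≤ Real.logb 2 s := by
        rw [Real.le_logb_iff_rpow_le (by norm_num) hsR]
        have h224 : ((2:ℝ)^((31:ℝ)/4)) ≤ 224 := by
          have hpow4 : ((2:ℝ)^((31:ℝ)/4))^(4:ℕ) = 2^(31:ℕ) := by
            rw [← Real.rpow_natCast ((2:ℝ)^((31:ℝ)/4)) 4,
              ← Real.rpow_mul (by norm_num : (0:ℝ) ≤ 2)]
            norm_num
          have h231 : ((2:ℝ)^((31:ℝ)/4))^(4:ℕ) ≤ (224:ℝ)^(4:ℕ) := by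
            rw [hpow4]
            norm_num
          exact le_of_pow_le_pow_left₀ (by norm_num) (by norm_num) h231
        calc (2:ℝ)^((31:ℝ)/4) ≤ 224 := h224
          _ ≤ (s:ℝ) := by exact_mod_cast hs224
      rw [hL7']
      norm_num
      linarith
  -- the quantity q
  set qR : ℝ := (k:ℝ) / (2^(t+1) * Real.logb 2 s) with hqRdef
  have hdenpos : (0:ℝ) < 2^(t+1) * Real.logb 2 s := by positivity
  have hq2 : (2:ℝ) ≤ qR := by
    rw [hqRdef, le_div_iff₀ hdenpos]
    calc (2:ℝ) * (2^(t+1) * Real.logb 2 s) = 2^(t+2) * Real.logb 2 s := by ring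
      _ ≤ (k:ℝ) := hk1
  have hqpos : (0:ℝ) < qR := by linarith
  set Q := ⌈qR⌉₊ with hQdef
  have hQq : qR ≤ (Q:ℝ) := Nat.le_ceil qR
  have hQ2 : 2 ≤ Q := by
    have h1 : (2:ℝ) ≤ (Q:ℝ) := le_trans hq2 hQq
    exact_mod_cast h1
  have hQle : (Q:ℝ) ≤ (3/2) * qR := by
    have h1 : ((Q:ℕ):ℝ) < qR + 1 := Nat.ceil_lt_add_one (le_of_lt hqpos)
    linarith
  -- budget: 2^(t-2)·Q·(4L+10) ≤ (63/64)k
  have hql : qR * Real.logb 2 s = (k:ℝ) / 2^(t+1) := by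
    rw [hqRdef]
    field_simp
  have hbudget : ((2^(t-2) * Q * (4*L+10) : ℕ):ℝ) ≤ (63/64) * (k:ℝ) := by
    have h1 : ((2^(t-2) * Q * (4*L+10) : ℕ):ℝ)
        = (2:ℝ)^(t-2) * (Q:ℝ) * ((4*L+10 : ℕ):ℝ) := by push_cast; ring
    rw [h1]
    have h2 : (2:ℝ)^(t-2) * (Q:ℝ) * ((4*L+10 : ℕ):ℝ)
        ≤ (2:ℝ)^(t-2) * ((3/2) * qR) * ((21/4) * Real.logb 2 s) := by
      have hp : (0:ℝ) ≤ (2:ℝ)^(t-2) := by positivity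
      have hQ0 : (0:ℝ) ≤ (Q:ℝ) := by positivity
      have hA : (0:ℝ) ≤ ((4*L+10 : ℕ):ℝ) := by positivity
      have m1 : (2:ℝ)^(t-2) * (Q:ℝ) ≤ (2:ℝ)^(t-2) * ((3/2)*qR) :=
        mul_le_mul_of_nonneg_left hQle hp
      have m2 : (2:ℝ)^(t-2) * (Q:ℝ) * ((4*L+10 : ℕ):ℝ)
          ≤ (2:ℝ)^(t-2) * ((3/2)*qR) * ((4*L+10 : ℕ):ℝ) :=
        mul_le_mul_of_nonneg_right m1 hA
      have hqr0 : (0:ℝ) ≤ (2:ℝ)^(t-2) * ((3/2)*qR) := by positivity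
      have m3 : (2:ℝ)^(t-2) * ((3/2)*qR) * ((4*L+10 : ℕ):ℝ)
          ≤ (2:ℝ)^(t-2) * ((3/2)*qR) * ((21/4) * Real.logb 2 s) :=
        mul_le_mul_of_nonneg_left hbound hqr0
      linarith
    have h3 : (2:ℝ)^(t-2) * ((3/2) * qR) * ((21/4) * Real.logb 2 s)
        = (63/8) * (2:ℝ)^(t-2) * (qR * Real.logb 2 s) := by ring
    have h4 : (2:ℝ)^(t+1) = 8 * 2^(t-2) := by
      have : t + 1 = (t-2) + 3 := by omega
      rw [this, pow_add]
      ring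
    have h5 : (63/8) * (2:ℝ)^(t-2) * (qR * Real.logb 2 s) = (63/64) * (k:ℝ) := by
      rw [hql, h4]
      have hne : (2:ℝ)^(t-2) ≠ 0 := by positivity
      field_simp
      ring
    linarith
  -- side condition
  have hside : 2^(t-2) * Q * (4 * L + 10) + 1 ≤ s := by
    have h1 : ((2^(t-2) * Q * (4*L+10) : ℕ):ℝ) ≤ (63/64) * (s:ℝ) := by
      have hks : ((k:ℕ):ℝ) ≤ (s:ℝ) := by exact_mod_cast hk2
      calc ((2^(t-2) * Q * (4*L+10) : ℕ):ℝ) ≤ (63/64) * (k:ℝ) := hbudget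
        _ ≤ (63/64) * (s:ℝ) := by linarith
    have h2 : (64 * (2^(t-2) * Q * (4*L+10)) : ℕ) ≤ 63 * s := by
      have : ((64 * (2^(t-2) * Q * (4*L+10)) : ℕ):ℝ) ≤ ((63 * s : ℕ):ℝ) := by
        push_cast
        push_cast at h1
        linarith
      exact_mod_cast this
    omega
  -- main density hypothesis
  have hmain : 3 * (s:ℝ) * ((4 * (s:ℝ)) / (Q:ℝ))^(t-2) ≤ (Multiset.card E : ℝ) := by
    have hQR : (0:ℝ) < (Q:ℝ) := by
      have : 0 < Q := by omega
      exact_mod_cast this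
    have hD : (4 * (s:ℝ)) / (Q:ℝ) ≤ (2 ^ (t + 3) * s * Real.logb 2 s) / k := by
      have hstep : (4 * (s:ℝ)) / (Q:ℝ) ≤ (4 * (s:ℝ)) / qR :=
        div_le_div_of_nonneg_left (by positivity) hqpos hQq
      have heq : (4 * (s:ℝ)) / qR = (2 ^ (t + 3) * s * Real.logb 2 s) / k := by
        rw [hqRdef]
        have hkpos : (0:ℝ) < (k:ℝ) := by
          have : 0 < k := by omega
          exact_mod_cast this
        have h8 : (2:ℝ)^(t+3) = 4 * 2^(t+1) := by
          have : t + 3 = (t+1) + 2 := by omega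
          rw [this, pow_add]
          ring
        rw [h8]
        field_simp
      linarith
    have hD0 : (0:ℝ) ≤ (4 * (s:ℝ)) / (Q:ℝ) := by positivity
    have hpow : ((4 * (s:ℝ)) / (Q:ℝ))^(t-2) ≤ ((2 ^ (t + 3) * s * Real.logb 2 s) / k)^(t-2) :=
      pow_le_pow_left₀ hD0 hD _
    have h3s : (0:ℝ) ≤ 3 * (s:ℝ) := by positivity
    calc 3 * (s:ℝ) * ((4 * (s:ℝ)) / (Q:ℝ))^(t-2)
        ≤ 3 * (s:ℝ) * ((2 ^ (t + 3) * s * Real.logb 2 s) / k)^(t-2) := by nlinarith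
      _ ≤ (Multiset.card E : ℝ) := hmlb
  -- apply the main induction
  have hcard' : ∀ e ∈ E, e.card ≤ (t-2) + 2 := by
    intro e he
    have := hE e he
    omega
  obtain ⟨S, hScard, hSspan⟩ := Stmt1Aux.main_ind (t-2) E Q hcard' hQ2 hside hmain
  rw [← hsdef, ← hLdef] at hScard
  have hScard2 : S.card ≤ 2^(t-2) * Q * (4*L+10) := by
    have hA : 2^(t-2)*Q*(4*L+10) = 2^(t-2)*Q*(4*L+9) + 2^(t-2)*Q := by ring
    have hB : (2^(t-2)-1)*Q ≤ 2^(t-2)*Q := Nat.mul_le_mul_right Q (Nat.sub_le _ _)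
    omega
  refine ⟨S, ?_, ?_⟩
  · -- S.card ≤ k
    have h1 : ((S.card : ℕ):ℝ) ≤ (63/64) * (k:ℝ) := by
      have hc : ((S.card : ℕ):ℝ) ≤ ((2^(t-2) * Q * (4*L+10) : ℕ):ℝ) := by
        exact_mod_cast hScard2
      linarith
    have h2 : ((S.card : ℕ):ℝ) ≤ ((k:ℕ):ℝ) := by
      have hk0 : (0:ℝ) ≤ (k:ℝ) := by positivity
      linarith
    exact_mod_cast h2
  · -- spanning
    have h1 : S.card + Q ≤ Multiset.card (E.filter (fun e => e ⊆ S)) := hSspan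
    have h2 : ((S.card + Q : ℕ):ℝ) ≤ (Multiset.card (E.filter (fun e => e ⊆ S)) : ℝ) := by
      exact_mod_cast h1
    push_cast at h2
    linarith
end

section
/- Let G = (V,E) be a multigraph with |V| = s ≥ 2 vertices, and let v ∈ V. Suppose that deg(v) ≥ 1 and deg(u) ≥ 3 for all u ∈ V \ {v}. Then G contains a path (p₁, p₂, …, p_k) and a cycle (c₁, c₂, …, c_ℓ) such that p₁ = v, p_k = c₁, k ≥ 1, ℓ ≥ 1, and k + ℓ ≤ 4·log₂(s). Here a cycle of length 1 means a self-loop at its vertex and a cycle of length 2 means a pair of parallel edges between two vertices. -/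
open scoped Classical

/-- The degree of a vertex `u` in a multigraph given by a multiset of unordered pairs:
every incident edge counts once, except a self-loop at `u`, which counts twice. -/
noncomputable def multigraphDegree {V : Type*} (E : Multiset (Sym2 V)) (u : V) : ℕ :=
  (E.map fun e => if e = Sym2.diag u then 2 else if u ∈ e then 1 else 0).sum

namespace Stmt3Aux

variable {V : Type*} [Fintype V]

noncomputable def ball (E : Multiset (Sym2 V)) (v : V) : ℕ → Finset V
  | 0 => {v}
  | i+1 => ball E v i ∪ Finset.univ.filter (fun w => ∃ u ∈ ball E v i, Sym2.mk u w ∈ E)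

noncomputable def lvl (E : Multiset (Sym2 V)) (v : V) : ℕ → Finset V
  | 0 => {v}
  | i+1 => ball E v (i+1) \ ball E v i

variable {E : Multiset (Sym2 V)} {v : V}

lemma ball_succ (i : ℕ) : ball E v (i+1) = ball E v i ∪ Finset.univ.filter (fun w => ∃ u ∈ ball E v i, Sym2.mk u w ∈ E) := rfl

lemma ball_subset_succ (i : ℕ) : ball E v i ⊆ ball E v (i+1) := by
  rw [ball_succ]; exact Finset.subset_union_left

lemma ball_mono {i j : ℕ} (h : i ≤ j) : ball E v i ⊆ ball E v j := by
  induction j with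
  | zero => simp_all
  | succ n ih =>
    rcases Nat.lt_or_ge i (n+1) with h'|h'
    · exact (ih (Nat.lt_succ_iff.mp h')).trans (ball_subset_succ n)
    · have : i = n+1 := le_antisymm h h'
      subst this; exact Finset.Subset.refl _

lemma mem_ball_succ_of_adj {u w : V} {i : ℕ} (hu : u ∈ ball E v i) (h : Sym2.mk u w ∈ E) :
    w ∈ ball E v (i+1) := by
  rw [ball_succ, Finset.mem_union, Finset.mem_filter]
  exact Or.inr ⟨Finset.mem_univ _, u, hu, h⟩

lemma lvl_subset_ball (i : ℕ) : lvl E v i ⊆ ball E v i := by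
  cases i with
  | zero => exact Finset.Subset.refl _
  | succ n => exact Finset.sdiff_subset

lemma v_mem_ball (i : ℕ) : v ∈ ball E v i := ball_mono (Nat.zero_le i) (by simp [ball])

lemma exists_lvl_of_mem_ball {u : V} {i : ℕ} (h : u ∈ ball E v i) : ∃ j ≤ i, u ∈ lvl E v j := by
  induction i with
  | zero => exact ⟨0, le_refl 0, h⟩
  | succ n ih =>
    by_cases h' : u ∈ ball E v n
    · obtain ⟨j, hj, hm⟩ := ih h'
      exact ⟨j, hj.trans (Nat.le_succ n), hm⟩
    · exact ⟨n+1, le_refl _, Finset.mem_sdiff.mpr ⟨h, h'⟩⟩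

lemma not_mem_ball_of_lvl {u : V} {i j : ℕ} (hij : i < j) (h : u ∈ lvl E v j) :
    u ∉ ball E v i := by
  cases j with
  | zero => omega
  | succ n =>
    intro hc
    exact (Finset.mem_sdiff.mp h).2 (ball_mono (Nat.lt_succ_iff.mp hij) hc)

lemma lvl_disjoint {u : V} {i j : ℕ} (hij : i < j) (hu : u ∈ lvl E v i) : u ∉ lvl E v j :=
  fun hc => not_mem_ball_of_lvl hij hc (lvl_subset_ball i hu)

lemma lvl_eq_of_mem {u : V} {i j : ℕ} (hi : u ∈ lvl E v i) (hj : u ∈ lvl E v j) : i = j := by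
  rcases Nat.lt_trichotomy i j with h|h|h
  · exact absurd hj (lvl_disjoint h hi)
  · exact h
  · exact absurd hi (lvl_disjoint h hj)

lemma lvl_le_of_mem_ball {u : V} {i j : ℕ} (hlvl : u ∈ lvl E v j) (hball : u ∈ ball E v i) : j ≤ i := by
  by_contra h
  exact not_mem_ball_of_lvl (Nat.lt_of_not_le h) hlvl hball

/-- levels of adjacent vertices differ by at most one. -/
lemma adj_lvl_le {u w : V} {i j : ℕ} (hu : u ∈ lvl E v i) (hw : w ∈ lvl E v j)
    (h : Sym2.mk u w ∈ E) : j ≤ i + 1 :=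
  lvl_le_of_mem_ball hw (mem_ball_succ_of_adj (lvl_subset_ball i hu) h)

lemma mem_lvl_zero {u : V} (h : u ∈ lvl E v 0) : u = v := by
  simpa [lvl] using h

lemma v_mem_lvl_zero : v ∈ lvl E v 0 := by simp [lvl]

/-- tree path to a vertex at level `i`. -/
lemma exists_tree_path {u : V} {i : ℕ} (h : u ∈ lvl E v i) :
    ∃ f : ℕ → V, f 0 = v ∧ f i = u ∧ (∀ j ≤ i, f j ∈ lvl E v j) ∧
      (∀ j < i, Sym2.mk (f j) (f (j+1)) ∈ E) := by
  induction i generalizing u with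
  | zero =>
    refine ⟨fun _ => v, rfl, (mem_lvl_zero h).symm, ?_, ?_⟩
    · intro j hj; interval_cases j; exact v_mem_lvl_zero
    · intro j hj; omega
  | succ n ih =>
    have h' := Finset.mem_sdiff.mp h
    have := h'.1
    rw [ball_succ, Finset.mem_union] at this
    rcases this with hc | hc
    · exact absurd hc h'.2
    · rw [Finset.mem_filter] at hc
      obtain ⟨-, w, hw, hadj⟩ := hc.imp_right id
      -- w ∈ ball n, edge w-u; w must be at level n
      obtain ⟨t, ht, hwt⟩ := exists_lvl_of_mem_ball hw
      have hun : u ∈ lvl E v (n+1) := h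
      have htn : t = n := by
        have h1 : n + 1 ≤ t + 1 := lvl_le_of_mem_ball hun (mem_ball_succ_of_adj (lvl_subset_ball t hwt) hadj)
        omega
      subst htn
      obtain ⟨f, hf0, hft, hflvl, hedge⟩ := ih hwt
      refine ⟨fun j => if j ≤ t then f j else u, by simp [hf0], by simp, ?_, ?_⟩
      · intro j hj
        by_cases hjt : j ≤ t
        · simpa [hjt] using hflvl j hjt
        · have : j = t + 1 := by omega
          subst this; simpa using hun
      · intro j hj
        have hjt : j ≤ t := by omega
        by_cases hj' : j < t
        · have : j + 1 ≤ t := hj'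
          simpa [hjt, this] using hedge j hj'
        · have hjeq : j = t := by omega
          subst hjeq
          simpa [hft] using hadj


lemma mk_eq_mk' {x y x' y' : V} :
    Sym2.mk x y = Sym2.mk x' y' ↔ (x = x' ∧ y = y') ∨ (x = y' ∧ y = x') := by
  exact Sym2.eq_iff

lemma diag_eq (u : V) : Sym2.diag u = Sym2.mk u u := rfl


lemma edge_weight_eq (u : V) (e : Sym2 V) :
    (if e = Sym2.diag u then 2 else if u ∈ e then 1 else 0) =
      2 * (if e = Sym2.diag u then 1 else 0) +
        ∑ w ∈ Finset.univ.erase u, (if e = Sym2.mk u w then 1 else 0) := by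
  induction e using Sym2.ind with
  | _ a b =>
    by_cases ha : a = u <;> by_cases hb : b = u
    · have he : Sym2.mk a b = Sym2.diag u := by rw [ha, hb]; rfl
      have hsum : ∑ w ∈ Finset.univ.erase u, (if Sym2.mk a b = Sym2.mk u w then 1 else 0) = 0 := by
        apply Finset.sum_eq_zero
        intro w hw
        have hwne := (Finset.mem_erase.mp hw).1
        rw [if_neg]
        rw [ha, hb, mk_eq_mk']
        rintro (⟨-, h⟩ | ⟨h, -⟩) <;> exact hwne h.symm
      rw [if_pos he, if_pos he, hsum]
    · have hne : Sym2.mk a b ≠ Sym2.diag u := by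
        rw [diag_eq]; simp only [ne_eq, mk_eq_mk']
        rintro (⟨-, h⟩ | ⟨-, h⟩) <;> exact hb h
      have hmem : u ∈ Sym2.mk a b := by rw [Sym2.mem_iff]; exact Or.inl ha.symm
      have hsum : ∑ w ∈ Finset.univ.erase u, (if Sym2.mk a b = Sym2.mk u w then 1 else 0) = 1 := by
        rw [Finset.sum_eq_single b]
        · rw [if_pos]; rw [mk_eq_mk']; exact Or.inl ⟨ha, rfl⟩
        · intro w hw hwb
          rw [if_neg]
          rw [mk_eq_mk']
          rintro (⟨-, h⟩ | ⟨-, h⟩)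
          · exact hwb h.symm
          · exact hb h
        · intro hbm
          exact absurd (Finset.mem_erase.mpr ⟨hb, Finset.mem_univ b⟩) hbm
      rw [if_neg hne, if_pos hmem, if_neg hne, hsum]
    · have hne : Sym2.mk a b ≠ Sym2.diag u := by
        rw [diag_eq]; simp only [ne_eq, mk_eq_mk']
        rintro (⟨h, -⟩ | ⟨h, -⟩) <;> exact ha h
      have hmem : u ∈ Sym2.mk a b := by rw [Sym2.mem_iff]; exact Or.inr hb.symm
      have hsum : ∑ w ∈ Finset.univ.erase u, (if Sym2.mk a b = Sym2.mk u w then 1 else 0) = 1 := by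
        rw [Finset.sum_eq_single a]
        · rw [if_pos]; rw [mk_eq_mk']; exact Or.inr ⟨rfl, hb⟩
        · intro w hw hwa
          rw [if_neg]
          rw [mk_eq_mk']
          rintro (⟨h, -⟩ | ⟨h', h⟩)
          · exact ha h
          · exact hwa h'.symm
        · intro ham
          exact absurd (Finset.mem_erase.mpr ⟨ha, Finset.mem_univ a⟩) ham
      rw [if_neg hne, if_pos hmem, if_neg hne, hsum]
    · have hne : Sym2.mk a b ≠ Sym2.diag u := by
        rw [diag_eq]; simp only [ne_eq, mk_eq_mk']
        rintro (⟨h, -⟩ | ⟨h, -⟩) <;> exact ha h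
      have hmem : u ∉ Sym2.mk a b := by
        rw [Sym2.mem_iff]
        rintro (h | h)
        · exact ha h.symm
        · exact hb h.symm
      have hsum : ∑ w ∈ Finset.univ.erase u, (if Sym2.mk a b = Sym2.mk u w then 1 else 0) = 0 := by
        apply Finset.sum_eq_zero
        intro w hw
        rw [if_neg]
        rw [mk_eq_mk']
        rintro (⟨h, -⟩ | ⟨-, h⟩)
        · exact ha h
        · exact hb h
      rw [if_neg hne, if_neg hmem, if_neg hne, hsum]

lemma degree_eq (E : Multiset (Sym2 V)) (u : V) :
    multigraphDegree E u = 2 * E.count (Sym2.diag u) +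
      ∑ w ∈ Finset.univ.erase u, E.count (Sym2.mk u w) := by
  induction E using Multiset.induction with
  | empty => simp [multigraphDegree]
  | cons e s ih =>
    rw [multigraphDegree, Multiset.map_cons, Multiset.sum_cons, ← multigraphDegree, ih]
    simp only [Multiset.count_cons]
    rw [edge_weight_eq u e]
    have hswap : ∀ w : V, s.count (Sym2.mk u w) + (if Sym2.mk u w = e then 1 else 0)
        = s.count (Sym2.mk u w) + (if e = Sym2.mk u w then 1 else 0) := by
      intro w; by_cases h : e = Sym2.mk u w <;> simp [h, eq_comm]
    simp only [hswap]
    rw [Finset.sum_add_distrib]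
    have hd : (if Sym2.diag u = e then (1:ℕ) else 0) = (if e = Sym2.diag u then 1 else 0) := by
      by_cases h : e = Sym2.diag u <;> simp [h, eq_comm]
    rw [hd]
    ring


def Good (E : Multiset (Sym2 V)) (v : V) (T : ℕ) : Prop :=
  (∀ j ≤ T, ∀ u ∈ lvl E v j, Sym2.diag u ∉ E) ∧
  (∀ j ≤ T, ∀ j' ≤ T, ∀ u ∈ lvl E v j, ∀ w ∈ lvl E v j', u ≠ w →
      E.count (Sym2.mk u w) ≤ 1) ∧
  (∀ j ≤ T, ∀ u ∈ lvl E v j, ∀ w ∈ lvl E v j, u ≠ w → Sym2.mk u w ∉ E) ∧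
  (∀ j ≤ T, 1 ≤ j → ∀ x ∈ lvl E v j, ∀ u ∈ lvl E v (j-1), ∀ u' ∈ lvl E v (j-1),
      Sym2.mk u x ∈ E → Sym2.mk u' x ∈ E → u = u')

lemma good_mono {T T' : ℕ} (h : T' ≤ T) (hg : Good E v T) : Good E v T' := by
  obtain ⟨h1, h2, h3, h4⟩ := hg
  exact ⟨fun j hj => h1 j (hj.trans h),
    fun j hj j' hj' => h2 j (hj.trans h) j' (hj'.trans h),
    fun j hj => h3 j (hj.trans h),
    fun j hj => h4 j (hj.trans h)⟩

/-- the neighbours of `u`. -/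
noncomputable def nbrs (E : Multiset (Sym2 V)) (u : V) : Finset V :=
  Finset.univ.filter (fun w => w ≠ u ∧ Sym2.mk u w ∈ E)

lemma mem_nbrs {u w : V} : w ∈ nbrs E u ↔ w ≠ u ∧ Sym2.mk u w ∈ E := by
  simp [nbrs]

/-- key step: assuming Good (i+1) and degree ≥ 3 off `v`, each vertex of level `i ≥ 1`
has at least two neighbours at level `i+1`. -/
lemma two_children (hdeg : ∀ u : V, u ≠ v → 3 ≤ multigraphDegree E u)
    {i : ℕ} (hi : 1 ≤ i) (hg : Good E v (i+1)) {u : V} (hu : u ∈ lvl E v i) :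
    2 ≤ ((nbrs E u) ∩ lvl E v (i+1)).card := by
  obtain ⟨g1, g2, g3, g4⟩ := hg
  have huv : u ≠ v := by
    intro h; subst h
    exact absurd hu (lvl_disjoint hi v_mem_lvl_zero)
  -- no self loop at u
  have hloop : Sym2.diag u ∉ E := g1 i (by omega) u hu
  have hcnt0 : E.count (Sym2.diag u) = 0 := Multiset.count_eq_zero.mpr hloop
  -- each neighbour has level ≤ i+1 and ≥ i-1 ; counts ≤ 1
  have hnb_lvl : ∀ w ∈ nbrs E u, ∃ j ≤ i + 1, w ∈ lvl E v j := by
    intro w hw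
    obtain ⟨hwne, hadj⟩ := mem_nbrs.mp hw
    exact exists_lvl_of_mem_ball (mem_ball_succ_of_adj (lvl_subset_ball i hu) hadj)
  -- degree bound gives at least 3 neighbours
  have hdeg3 : 3 ≤ ∑ w ∈ Finset.univ.erase u, E.count (Sym2.mk u w) := by
    have := hdeg u huv
    rw [degree_eq, hcnt0] at this
    simpa using this
  have hsum_le : ∑ w ∈ Finset.univ.erase u, E.count (Sym2.mk u w) ≤ (nbrs E u).card := by
    rw [← Finset.sum_filter_add_sum_filter_not (Finset.univ.erase u)
      (fun w => Sym2.mk u w ∈ E)]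
    have h2' : ∀ w ∈ (Finset.univ.erase u).filter (fun w => Sym2.mk u w ∈ E),
        E.count (Sym2.mk u w) ≤ 1 := by
      intro w hw
      rw [Finset.mem_filter, Finset.mem_erase] at hw
      obtain ⟨⟨hwne, -⟩, hadj⟩ := hw
      obtain ⟨j, hj, hwj⟩ := hnb_lvl w (mem_nbrs.mpr ⟨hwne, hadj⟩)
      exact g2 i (by omega) j hj u hu w hwj (Ne.symm hwne)
    have e1 : ∑ w ∈ (Finset.univ.erase u).filter (fun w => Sym2.mk u w ∈ E), E.count (Sym2.mk u w)
        ≤ ∑ _w ∈ (Finset.univ.erase u).filter (fun w => Sym2.mk u w ∈ E), 1 :=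
      Finset.sum_le_sum h2'
    have e2 : ∑ w ∈ (Finset.univ.erase u).filter (fun w => ¬ Sym2.mk u w ∈ E),
        E.count (Sym2.mk u w) = 0 := by
      apply Finset.sum_eq_zero
      intro w hw
      rw [Finset.mem_filter] at hw
      exact Multiset.count_eq_zero.mpr hw.2
    have e3 : (Finset.univ.erase u).filter (fun w => Sym2.mk u w ∈ E) ⊆ nbrs E u := by
      intro w hw
      rw [Finset.mem_filter, Finset.mem_erase] at hw
      exact mem_nbrs.mpr ⟨hw.1.1, hw.2⟩
    have e4 := Finset.card_le_card e3
    simp only [Finset.sum_const, smul_eq_mul, mul_one] at e1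
    omega
  have hcard3 : 3 ≤ (nbrs E u).card := hdeg3.trans hsum_le
  -- nbrs split into three levels
  have hsplit : nbrs E u ⊆ (nbrs E u ∩ lvl E v (i-1)) ∪ (nbrs E u ∩ lvl E v i)
      ∪ (nbrs E u ∩ lvl E v (i+1)) := by
    intro w hw
    obtain ⟨j, hj, hwj⟩ := hnb_lvl w hw
    obtain ⟨hwne, hadj⟩ := mem_nbrs.mp hw
    have hji : i ≤ j + 1 := by
      rw [Sym2.eq_swap] at hadj
      exact adj_lvl_le hwj hu hadj
    simp only [Finset.mem_union, Finset.mem_inter]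
    rcases Nat.lt_trichotomy j i with h|h|h
    · have : j = i - 1 := by omega
      subst this; exact Or.inl (Or.inl ⟨hw, hwj⟩)
    · subst h; exact Or.inl (Or.inr ⟨hw, hwj⟩)
    · have : j = i + 1 := by omega
      subst this; exact Or.inr ⟨hw, hwj⟩
  -- same-level neighbours: none
  have hmid : (nbrs E u ∩ lvl E v i) = ∅ := by
    rw [Finset.eq_empty_iff_forall_notMem]
    intro w hw
    rw [Finset.mem_inter, mem_nbrs] at hw
    exact g3 i (by omega) u hu w hw.2 (Ne.symm hw.1.1) hw.1.2
  -- at most one parent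
  have hpar : (nbrs E u ∩ lvl E v (i-1)).card ≤ 1 := by
    rw [Finset.card_le_one]
    intro a ha b hb
    rw [Finset.mem_inter, mem_nbrs] at ha hb
    have hadja : Sym2.mk a u ∈ E := by rw [Sym2.eq_swap]; exact ha.1.2
    have hadjb : Sym2.mk b u ∈ E := by rw [Sym2.eq_swap]; exact hb.1.2
    exact g4 i (by omega) hi u hu a ha.2 b hb.2 hadja hadjb
  have h1c := Finset.card_le_card hsplit
  have h2c := Finset.card_union_le (nbrs E u ∩ lvl E v (i-1) ∪ nbrs E u ∩ lvl E v i)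
    (nbrs E u ∩ lvl E v (i+1))
  have h3c := Finset.card_union_le (nbrs E u ∩ lvl E v (i-1)) (nbrs E u ∩ lvl E v i)
  have hmid' : (nbrs E u ∩ lvl E v i).card = 0 := by rw [hmid]; rfl
  omega

/-- under Good (i+1), level sets double. -/
lemma lvl_doubling (hdeg : ∀ u : V, u ≠ v → 3 ≤ multigraphDegree E u)
    {i : ℕ} (hi : 1 ≤ i) (hg : Good E v (i+1)) :
    2 * (lvl E v i).card ≤ (lvl E v (i+1)).card := by
  obtain ⟨g1, g2, g3, g4⟩ := hg
  have hdisj : ∀ u₁ ∈ lvl E v i, ∀ u₂ ∈ lvl E v i, u₁ ≠ u₂ →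
      Disjoint (nbrs E u₁ ∩ lvl E v (i+1)) (nbrs E u₂ ∩ lvl E v (i+1)) := by
    intro u₁ h1 u₂ h2 hne
    rw [Finset.disjoint_left]
    intro x hx1 hx2
    rw [Finset.mem_inter, mem_nbrs] at hx1 hx2
    have hadj1 : Sym2.mk u₁ x ∈ E := hx1.1.2
    have hadj2 : Sym2.mk u₂ x ∈ E := hx2.1.2
    have : u₁ = u₂ := by
      have := g4 (i+1) (le_refl _) (by omega) x hx1.2 u₁ (by simpa using h1) u₂ (by simpa using h2) hadj1 hadj2
      exact this
    exact hne this
  have hsub : (lvl E v i).biUnion (fun u => nbrs E u ∩ lvl E v (i+1)) ⊆ lvl E v (i+1) := by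
    intro x hx
    rw [Finset.mem_biUnion] at hx
    obtain ⟨u, hu, hxu⟩ := hx
    exact (Finset.mem_inter.mp hxu).2
  calc 2 * (lvl E v i).card = ∑ _u ∈ lvl E v i, 2 := by rw [Finset.sum_const]; ring
    _ ≤ ∑ u ∈ lvl E v i, (nbrs E u ∩ lvl E v (i+1)).card := by
        apply Finset.sum_le_sum
        intro u hu
        exact two_children hdeg hi ⟨g1, g2, g3, g4⟩ hu
    _ = ((lvl E v i).biUnion (fun u => nbrs E u ∩ lvl E v (i+1))).card := by
        rw [Finset.card_biUnion hdisj]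
    _ ≤ (lvl E v (i+1)).card := Finset.card_le_card hsub


lemma nonempty_lvl_one (hdegv : 1 ≤ multigraphDegree E v) (hloop : Sym2.diag v ∉ E) :
    ∃ w, w ∈ lvl E v 1 := by
  have h := hdegv
  rw [degree_eq, Multiset.count_eq_zero.mpr hloop] at h
  simp only [mul_zero, zero_add] at h
  have : ∃ w ∈ Finset.univ.erase v, E.count (Sym2.mk v w) ≠ 0 := by
    by_contra hc
    push_neg at hc
    rw [Finset.sum_eq_zero hc] at h
    omega
  obtain ⟨w, hw, hcnt⟩ := this
  have hwv : w ≠ v := (Finset.mem_erase.mp hw).1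
  have hadj : Sym2.mk v w ∈ E := by
    rw [← Multiset.count_pos] at *
    omega
  have hball : w ∈ ball E v 1 := mem_ball_succ_of_adj (by simp [ball]) hadj
  refine ⟨w, Finset.mem_sdiff.mpr ⟨hball, ?_⟩⟩
  simp [ball, hwv]

lemma lvl_card_ge (hdeg : ∀ u : V, u ≠ v → 3 ≤ multigraphDegree E u)
    (hdegv : 1 ≤ multigraphDegree E v) {T : ℕ} (hg : Good E v T) :
    ∀ i, 1 ≤ i → i ≤ T → 2^(i-1) ≤ (lvl E v i).card := by
  intro i
  induction i with
  | zero => omega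
  | succ n ih =>
    intro _ hnT
    by_cases hn : n = 0
    · subst hn
      obtain ⟨w, hw⟩ := nonempty_lvl_one hdegv (hg.1 0 (by omega) v v_mem_lvl_zero)
      simpa using Finset.card_pos.mpr ⟨w, hw⟩
    · have h1 : 1 ≤ n := by omega
      have hprev := ih h1 (by omega)
      have hdouble := lvl_doubling hdeg h1 (good_mono hnT hg)
      calc 2^(n+1-1) = 2 * 2^(n-1) := by
            rw [← pow_succ']
            congr 1
            omega
        _ ≤ 2 * (lvl E v n).card := by omega
        _ ≤ (lvl E v (n+1)).card := hdouble

lemma sum_lvl_le (n : ℕ) : ∑ i ∈ Finset.range n, (lvl E v i).card ≤ Fintype.card V := by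
  rw [← Finset.card_biUnion]
  · exact Finset.card_le_univ _
  · intro i _ j _ hij
    rw [Function.onFun, Finset.disjoint_left]
    intro u hu hu'
    rcases Nat.lt_or_ge i j with h|h
    · exact lvl_disjoint h hu hu'
    · exact lvl_disjoint (by omega) hu' hu

lemma two_pow_sum (n : ℕ) : ∑ i ∈ Finset.range n, 2^i + 1 = 2^n := by
  induction n with
  | zero => simp
  | succ m ih => rw [Finset.sum_range_succ]; rw [pow_succ]; omega

lemma exists_bad (hdeg : ∀ u : V, u ≠ v → 3 ≤ multigraphDegree E u)
    (hdegv : 1 ≤ multigraphDegree E v) : ∃ T, ¬ Good E v T := by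
  by_contra hc
  push_neg at hc
  have := lvl_card_ge hdeg hdegv (hc (Fintype.card V + 1)) (Fintype.card V + 1) (by omega) (le_refl _)
  have hle : (lvl E v (Fintype.card V + 1)).card ≤ Fintype.card V := Finset.card_le_univ _
  have := Nat.lt_two_pow_self (n := Fintype.card V)
  simp only [Nat.add_sub_cancel] at *
  omega

lemma pow_bound (hdeg : ∀ u : V, u ≠ v → 3 ≤ multigraphDegree E u)
    (hdegv : 1 ≤ multigraphDegree E v) {T : ℕ} (hT1 : 1 ≤ T) (hg : Good E v (T-1)) :
    2^(T-1) ≤ Fintype.card V := by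
  by_cases hT : T = 1
  · subst hT
    simpa using Nat.succ_le_of_lt (Fintype.card_pos_iff.mpr ⟨v⟩)
  · have h2T : 2 ≤ T := by omega
    have hge : ∀ i, 1 ≤ i → i ≤ T - 1 → 2^(i-1) ≤ (lvl E v i).card :=
      lvl_card_ge hdeg hdegv hg
    have hsum := sum_lvl_le (E := E) (v := v) T
    have h0 : (lvl E v 0).card = 1 := by simp [lvl]
    have : ∑ i ∈ Finset.range T, (lvl E v i).card
        ≥ 1 + ∑ i ∈ Finset.range (T-1), 2^i := by
      have hT' : T = (T-1) + 1 := by omega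
      rw [hT', Finset.sum_range_succ']
      simp only [Nat.add_sub_cancel]
      have : ∑ i ∈ Finset.range (T-1), 2^i ≤ ∑ i ∈ Finset.range (T-1), (lvl E v (i+1)).card := by
        apply Finset.sum_le_sum
        intro i hi
        rw [Finset.mem_range] at hi
        have := hge (i+1) (by omega) (by omega)
        simpa using this
      omega
    have hgeo := two_pow_sum (T-1)
    omega


section Lists
variable {α : Type*}

lemma mk_eq_mk'' {x y x' y' : α} :
    Sym2.mk x y = Sym2.mk x' y' ↔ (x = x' ∧ y = y') ∨ (x = y' ∧ y = x') := by
  exact Sym2.eq_iff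

/-- a list built from an indexing function. -/
def mkc (g : ℕ → α) (n : ℕ) : List α := (List.range n).map g

lemma mkc_length (g : ℕ → α) (n : ℕ) : (mkc g n).length = n := by simp [mkc]

lemma mkc_ne_nil (g : ℕ → α) {n : ℕ} (h : 1 ≤ n) : mkc g n ≠ [] := by
  intro hc
  have := mkc_length g n
  rw [hc] at this
  simp at this
  omega

lemma mkc_get (g : ℕ → α) {n i : ℕ} (h : i < (mkc g n).length) :
    (mkc g n).get ⟨i, h⟩ = g i := by
  simp [mkc]

lemma mkc_head? (g : ℕ → α) {n : ℕ} (h : 1 ≤ n) : (mkc g n).head? = some (g 0) := by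
  obtain ⟨m, rfl⟩ : ∃ m, n = m + 1 := ⟨n - 1, by omega⟩
  rw [mkc, List.range_succ_eq_map]
  simp

lemma mkc_getLast? (g : ℕ → α) {n : ℕ} (h : 1 ≤ n) :
    (mkc g n).getLast? = some (g (n - 1)) := by
  obtain ⟨m, rfl⟩ : ∃ m, n = m + 1 := ⟨n - 1, by omega⟩
  rw [mkc, List.range_succ, List.map_append]
  simp [List.getLast?_concat]

lemma mkc_nodup (g : ℕ → α) {n : ℕ}
    (hinj : ∀ i < n, ∀ j < n, g i = g j → i = j) : (mkc g n).Nodup := by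
  apply List.Nodup.map_on _ (List.nodup_range (n := n))
  intro i hi j hj hgij
  rw [List.mem_range] at hi hj
  exact hinj i hi j hj hgij

lemma mkc_chain' (g : ℕ → α) {n : ℕ} {R : α → α → Prop}
    (h : ∀ i, i + 1 < n → R (g i) (g (i+1))) : (mkc g n).Chain' R := by
  show List.IsChain R _
  rw [List.isChain_iff_getElem]
  intro i hi
  rw [mkc_length] at hi
  simp only [mkc, List.getElem_map, List.getElem_range]
  exact h i (by omega)

lemma mkc_cycle_edges (g : ℕ → α) {n : ℕ} (h : 1 ≤ n) :
    ((mkc g n).zip ((mkc g n).rotate 1)).map (Function.uncurry Sym2.mk)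
      = (List.range n).map (fun t => Sym2.mk (g t) (g ((t+1) % n))) := by
  apply List.ext_get
  · simp [mkc]
  · intro i h1 h2
    have hlen : ((mkc g n).zip ((mkc g n).rotate 1)).length = n := by simp [mkc]
    have hi : i < ((mkc g n).zip ((mkc g n).rotate 1)).length := by
      simpa [mkc] using h1
    simp only [List.get_eq_getElem, List.getElem_map, List.getElem_range, List.getElem_zip]
    show Quot.mk _ _ = Quot.mk _ (_, _)
    congr 1
    have hrot := List.get_rotate (mkc g n) 1
      ⟨i, by rw [List.length_rotate]; rw [mkc_length]; rw [hlen] at hi; omega⟩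
    simp only [List.get_eq_getElem] at hrot
    rw [hrot]
    simp only [mkc, List.getElem_map, List.getElem_range, List.length_map, List.length_range]

lemma cycle_edge_fn_inj {g : ℕ → α} {n : ℕ} (hn : 3 ≤ n)
    (hinj : ∀ i < n, ∀ j < n, g i = g j → i = j) :
    ∀ t₁ < n, ∀ t₂ < n,
      Sym2.mk (g t₁) (g ((t₁+1) % n)) = Sym2.mk (g t₂) (g ((t₂+1) % n)) → t₁ = t₂ := by
  intro t₁ h1 t₂ h2 heq
  have hm1 : (t₁+1) % n < n := Nat.mod_lt _ (by omega)
  have hm2 : (t₂+1) % n < n := Nat.mod_lt _ (by omega)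
  rcases mk_eq_mk''.mp heq with ⟨ha, -⟩ | ⟨ha, hb⟩
  · exact hinj t₁ h1 t₂ h2 ha
  · have e1 : t₁ = (t₂+1) % n := hinj t₁ h1 _ hm2 ha
    have e2 : (t₁+1) % n = t₂ := hinj _ hm1 t₂ h2 hb
    by_cases c1 : t₁ + 1 = n <;> by_cases c2 : t₂ + 1 = n
    · omega
    · rw [Nat.mod_eq_of_lt (by omega)] at e1
      rw [c1, Nat.mod_self] at e2
      omega
    · rw [c2, Nat.mod_self] at e1
      rw [Nat.mod_eq_of_lt (by omega)] at e2
      omega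
    · rw [Nat.mod_eq_of_lt (by omega)] at e1
      rw [Nat.mod_eq_of_lt (by omega)] at e2
      omega

lemma coe_le_of_nodup {l : List α} {M : Multiset α}
    (hn : l.Nodup) (hb : ∀ x ∈ l, x ∈ M) : (l : Multiset α) ≤ M := by
  rw [Multiset.le_iff_count]
  intro a
  by_cases hm : a ∈ l
  · have h1 : l.count a ≤ 1 := List.nodup_iff_count_le_one.mp hn a
    have h2 : 1 ≤ M.count a := Multiset.one_le_count_iff_mem.mpr (hb a hm)
    simpa using h1.trans h2
  · have : l.count a = 0 := List.count_eq_zero.mpr hm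
    simp [this]

end Lists


def Sol (E : Multiset (Sym2 V)) (v : V) (n : ℕ) : Prop :=
  ∃ p c : List V, p ≠ [] ∧ c ≠ [] ∧ p.Nodup ∧ c.Nodup ∧
    p.head? = some v ∧ p.getLast? = c.head? ∧
    p.Chain' (fun a b => Sym2.mk a b ∈ E) ∧
    (((c.zip (c.rotate 1)).map (Function.uncurry Sym2.mk) : List (Sym2 V)) : Multiset (Sym2 V)) ≤ E ∧
    p.length + c.length ≤ n ∧ p.length + c.length ≤ Fintype.card V + 1

lemma tree_inj {f : ℕ → V} {j : ℕ} (hf : ∀ t ≤ j, f t ∈ lvl E v t) :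
    ∀ a ≤ j, ∀ b ≤ j, f a = f b → a = b := by
  intro a ha b hb h
  exact lvl_eq_of_mem (hf a ha) (h ▸ hf b hb)

lemma path_props {f : ℕ → V} {j : ℕ} (h0 : f 0 = v)
    (hf : ∀ t ≤ j, f t ∈ lvl E v t) (he : ∀ t < j, Sym2.mk (f t) (f (t+1)) ∈ E) :
    (mkc f (j+1)) ≠ [] ∧ (mkc f (j+1)).Nodup ∧ (mkc f (j+1)).head? = some v ∧
      (mkc f (j+1)).getLast? = some (f j) ∧
      (mkc f (j+1)).Chain' (fun a b => Sym2.mk a b ∈ E) ∧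
      (mkc f (j+1)).length = j + 1 := by
  refine ⟨mkc_ne_nil f (by omega), ?_, ?_, ?_, ?_, mkc_length f (j+1)⟩
  · exact mkc_nodup f (fun a ha b hb h => tree_inj hf a (by omega) b (by omega) h)
  · rw [mkc_head? f (by omega), h0]
  · rw [mkc_getLast? f (by omega)]
    simp
  · exact mkc_chain' f (fun t ht => he t (by omega))

lemma exists_meet {f f' : ℕ → V} {d : ℕ} (h0 : f 0 = v) (h0' : f' 0 = v)
    (hne : f d ≠ f' d) :
    ∃ m < d, f m = f' m ∧ ∀ t, m < t → t ≤ d → f t ≠ f' t := by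
  classical
  set M : Finset ℕ := (Finset.range (d+1)).filter (fun t => f t = f' t) with hM
  have h0M : 0 ∈ M := by
    rw [hM, Finset.mem_filter, Finset.mem_range]
    exact ⟨by omega, by rw [h0, h0']⟩
  have hMne : M.Nonempty := ⟨0, h0M⟩
  set m := M.max' hMne with hm
  have hmM : m ∈ M := M.max'_mem hMne
  rw [hM, Finset.mem_filter, Finset.mem_range] at hmM
  have hmax : ∀ t, m < t → t ≤ d → f t ≠ f' t := by
    intro t hmt htd hc
    have : t ∈ M := by
      rw [hM, Finset.mem_filter, Finset.mem_range]
      exact ⟨by omega, hc⟩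
    have := M.le_max' t this
    omega
  have hmd : m < d := by
    rcases Nat.lt_or_ge m d with h|h
    · exact h
    · exfalso
      have : m = d := by omega
      exact hne (this ▸ hmM.2)
  exact ⟨m, hmd, hmM.2, hmax⟩

lemma solA {j T : ℕ} (hj : j ≤ T) {u : V} (hu : u ∈ lvl E v j)
    (hloop : Sym2.diag u ∈ E) : Sol E v (2*T+3) := by
  obtain ⟨f, hf0, hfj, hflvl, hfedge⟩ := exists_tree_path hu
  obtain ⟨hne, hnodup, hhead, hlast, hchain, hlen⟩ := path_props hf0 hflvl hfedge
  refine ⟨mkc f (j+1), mkc (fun _ => u) 1, hne, mkc_ne_nil _ (by omega), hnodup,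
    ?_, hhead, ?_, hchain, ?_, ?_, ?_⟩
  · exact mkc_nodup _ (fun a ha b hb _ => by omega)
  · rw [hlast, mkc_head? _ (by omega), hfj]
  · rw [mkc_cycle_edges _ (le_refl 1)]
    have : (List.range 1).map (fun t => Sym2.mk ((fun _ => u) t) ((fun _ => u) ((t+1) % 1)))
        = [Sym2.mk u u] := by
      rw [show List.range 1 = [0] from rfl]
      simp
    rw [this]
    apply coe_le_of_nodup (List.nodup_singleton _)
    intro x hx
    rw [List.mem_singleton] at hx
    subst hx
    rw [← diag_eq]
    exact hloop
  · rw [hlen, mkc_length]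
    omega
  · rw [hlen, mkc_length]
    have := hnodup.length_le_card
    rw [hlen] at this
    omega

lemma solB {j j' T : ℕ} (hj : j ≤ T) (hjj' : j ≤ j') {u w : V} (hu : u ∈ lvl E v j)
    (hw : w ∈ lvl E v j') (huw : u ≠ w) (hcnt : 2 ≤ E.count (Sym2.mk u w)) :
    Sol E v (2*T+3) := by
  have hadj : Sym2.mk u w ∈ E := by
    rw [← Multiset.count_pos]
    omega
  have hj'le : j' ≤ j + 1 := adj_lvl_le hu hw hadj
  obtain ⟨f, hf0, hfj, hflvl, hfedge⟩ := exists_tree_path hu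
  obtain ⟨hne, hnodup, hhead, hlast, hchain, hlen⟩ := path_props hf0 hflvl hfedge
  set g : ℕ → V := fun t => if t = 0 then u else w with hg
  have hginj : ∀ a < 2, ∀ b < 2, g a = g b → a = b := by
    intro a ha b hb hab
    simp only [hg] at hab
    by_cases ha0 : a = 0 <;> by_cases hb0 : b = 0
    · omega
    · exfalso; rw [if_pos ha0, if_neg hb0] at hab; exact huw hab
    · exfalso; rw [if_neg ha0, if_pos hb0] at hab; exact huw hab.symm
    · omega
  refine ⟨mkc f (j+1), mkc g 2, hne, mkc_ne_nil _ (by omega), hnodup,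
    mkc_nodup _ hginj, hhead, ?_, hchain, ?_, ?_, ?_⟩
  · rw [hlast, mkc_head? _ (by omega), hfj]
    simp [hg]
  · rw [mkc_cycle_edges _ (by omega)]
    have hlist : (List.range 2).map (fun t => Sym2.mk (g t) (g ((t+1) % 2)))
        = [Sym2.mk u w, Sym2.mk u w] := by
      have : List.range 2 = [0, 1] := by rfl
      rw [this]
      simp only [hg, List.map_cons, List.map_nil]
      norm_num
    rw [hlist]
    rw [Multiset.le_iff_count]
    intro a
    by_cases ha : a = Sym2.mk u w
    · subst ha
      have : Multiset.count (Sym2.mk u w) (↑[Sym2.mk u w, Sym2.mk u w] : Multiset (Sym2 V)) = 2 := by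
        simp
      omega
    · have : Multiset.count a (↑[Sym2.mk u w, Sym2.mk u w] : Multiset (Sym2 V)) = 0 := by
        simp [ha]
      omega
  · rw [hlen, mkc_length]
    omega
  · -- combined list for the cardinality bound
    have hcomb : (mkc (fun t => if t ≤ j then f t else w) (j+2)).Nodup := by
      apply mkc_nodup
      intro a ha b hb hab
      rcases Nat.lt_or_ge a (j+1) with ha'|ha' <;> rcases Nat.lt_or_ge b (j+1) with hb'|hb'
      · rw [if_pos (show a ≤ j by omega), if_pos (show b ≤ j by omega)] at hab
        exact tree_inj hflvl a (by omega) b (by omega) hab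
      · exfalso
        rw [if_pos (show a ≤ j by omega), if_neg (show ¬ b ≤ j by omega)] at hab
        have hfa : w ∈ lvl E v a := by rw [← hab]; exact hflvl a (by omega)
        have haj' : a = j' := lvl_eq_of_mem hfa hw
        have haj : a = j := by omega
        exact huw (by rw [← hfj, ← haj]; exact hab)
      · exfalso
        rw [if_neg (show ¬ a ≤ j by omega), if_pos (show b ≤ j by omega)] at hab
        have hfb : w ∈ lvl E v b := by rw [hab]; exact hflvl b (by omega)
        have hbj' : b = j' := lvl_eq_of_mem hfb hw
        have hbj : b = j := by omega
        exact huw (by rw [← hfj, ← hbj]; exact hab.symm)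
      · omega
    have := hcomb.length_le_card
    rw [mkc_length] at this
    rw [hlen, mkc_length]
    omega


lemma solC {j T : ℕ} (hj : j ≤ T) {u w : V} (hu : u ∈ lvl E v j) (hw : w ∈ lvl E v j)
    (huw : u ≠ w) (hadj : Sym2.mk u w ∈ E) : Sol E v (2*T+3) := by
  have hj1 : 1 ≤ j := by
    rcases Nat.eq_zero_or_pos j with h|h
    · subst h
      exact absurd ((mem_lvl_zero hu).trans (mem_lvl_zero hw).symm) huw
    · exact h
  obtain ⟨f, hf0, hfj, hflvl, hfedge⟩ := exists_tree_path hu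
  obtain ⟨f', hf'0, hf'j, hf'lvl, hf'edge⟩ := exists_tree_path hw
  have hnej : f j ≠ f' j := by rw [hfj, hf'j]; exact huw
  obtain ⟨m, hmd, hmeet, hmax⟩ := exists_meet hf0 hf'0 hnej
  set q := j - m with hq
  have hq1 : 1 ≤ q := by omega
  set n := 2*q + 1 with hn
  have hn3 : 3 ≤ n := by omega
  set g : ℕ → V := fun t => if t ≤ q then f (m+t) else f' (m + (2*q+1 - t)) with hg
  have gval1 : ∀ t, t ≤ q → g t = f (m+t) := by
    intro t ht; simp only [hg]; rw [if_pos ht]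
  have gval2 : ∀ t, q < t → g t = f' (m + (2*q+1 - t)) := by
    intro t ht; simp only [hg]; rw [if_neg (by omega)]
  have gl1 : ∀ t, t ≤ q → g t ∈ lvl E v (m+t) := by
    intro t ht; rw [gval1 t ht]; exact hflvl (m+t) (by omega)
  have gl2 : ∀ t, q < t → t < n → g t ∈ lvl E v (m + (2*q+1 - t)) := by
    intro t ht htn; rw [gval2 t ht]; exact hf'lvl (m + (2*q+1 - t)) (by omega)
  have ginj : ∀ a < n, ∀ b < n, g a = g b → a = b := by
    intro a ha b hb hab
    by_cases caq : a ≤ q <;> by_cases cbq : b ≤ q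
    · have := lvl_eq_of_mem (gl1 a caq) (hab ▸ gl1 b cbq)
      omega
    · have heq := lvl_eq_of_mem (gl1 a caq) (hab ▸ gl2 b (by omega) hb)
      have ha' : a = 2*q+1-b := by omega
      exfalso
      have h1 : g a = f (m+a) := gval1 a caq
      have h2 : g b = f' (m + (2*q+1-b)) := gval2 b (by omega)
      rw [← ha'] at h2
      exact hmax (m+a) (by omega) (by omega) (by rw [← h1, ← h2]; exact hab)
    · have heq := lvl_eq_of_mem (gl2 a (by omega) ha) (hab ▸ gl1 b cbq)
      have hb' : b = 2*q+1-a := by omega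
      exfalso
      have h1 : g b = f (m+b) := gval1 b cbq
      have h2 : g a = f' (m + (2*q+1-a)) := gval2 a (by omega)
      rw [← hb'] at h2
      exact hmax (m+b) (by omega) (by omega) (by rw [← h1, ← h2]; exact hab.symm)
    · have := lvl_eq_of_mem (gl2 a (by omega) ha) (hab ▸ gl2 b (by omega) hb)
      omega
  have gedge : ∀ t, t < n → Sym2.mk (g t) (g ((t+1) % n)) ∈ E := by
    intro t ht
    rcases Nat.lt_trichotomy t q with h|h|h
    · -- f-branch edge
      have hmod : (t+1) % n = t+1 := Nat.mod_eq_of_lt (by omega)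
      rw [hmod, gval1 t (by omega), gval1 (t+1) (by omega)]
      have : m + (t+1) = (m+t) + 1 := by omega
      rw [this]
      exact hfedge (m+t) (by omega)
    · -- cross edge
      have hmod : (t+1) % n = t+1 := Nat.mod_eq_of_lt (by omega)
      rw [hmod, gval1 t (by omega), gval2 (t+1) (by omega)]
      have e1 : m + t = j := by omega
      have e2 : m + (2*q+1 - (t+1)) = j := by omega
      rw [e1, e2, hfj, hf'j]
      exact hadj
    · by_cases ht' : t = 2*q
      · -- wrap-around edge
        subst ht'
        have hmod : (2*q+1) % n = 0 := by
          rw [hn]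
          simp
        rw [hmod, gval2 (2*q) (by omega), gval1 0 (by omega)]
        have e1 : m + (2*q+1 - 2*q) = m + 1 := by omega
        have e2 : m + 0 = m := by omega
        rw [e1, e2, hmeet]
        rw [Sym2.eq_swap]
        exact hf'edge m (by omega)
      · -- f'-branch edge
        have hmod : (t+1) % n = t+1 := Nat.mod_eq_of_lt (by omega)
        rw [hmod, gval2 t (by omega), gval2 (t+1) (by omega)]
        have e1 : m + (2*q+1 - t) = (m + (2*q+1 - (t+1))) + 1 := by omega
        rw [e1]
        rw [Sym2.eq_swap]
        exact hf'edge (m + (2*q+1 - (t+1))) (by omega)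
  obtain ⟨hne, hnodup, hhead, hlast, hchain, hlen⟩ :=
    path_props (j := m) hf0 (fun t ht => hflvl t (by omega)) (fun t ht => hfedge t (by omega))
  refine ⟨mkc f (m+1), mkc g n, hne, mkc_ne_nil _ (by omega), hnodup,
    mkc_nodup _ ginj, hhead, ?_, hchain, ?_, ?_, ?_⟩
  · rw [hlast, mkc_head? _ (by omega)]
    rw [gval1 0 (by omega)]
    norm_num
  · rw [mkc_cycle_edges _ (by omega)]
    apply coe_le_of_nodup
    · apply List.Nodup.map_on _ (List.nodup_range (n := n))
      intro a ha b hb hab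
      rw [List.mem_range] at ha hb
      exact cycle_edge_fn_inj hn3 ginj a ha b hb hab
    · intro x hx
      rw [List.mem_map] at hx
      obtain ⟨t, ht, rfl⟩ := hx
      rw [List.mem_range] at ht
      exact gedge t ht
  · rw [hlen, mkc_length]
    omega
  · set h : ℕ → V := fun t => if t ≤ m then f t else g (t - m) with hh
    have hcomb : (mkc h (m + n)).Nodup := by
      apply mkc_nodup
      intro a ha b hb hab
      simp only [hh] at hab
      by_cases cam : a ≤ m <;> by_cases cbm : b ≤ m
      · rw [if_pos cam, if_pos cbm] at hab
        exact tree_inj hflvl a (by omega) b (by omega) hab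
      · exfalso
        rw [if_pos cam, if_neg cbm] at hab
        have hbl : b - m < n := by omega
        by_cases cbq : b - m ≤ q
        · have := lvl_eq_of_mem (hflvl a (by omega)) (hab ▸ gl1 (b-m) cbq)
          omega
        · have := lvl_eq_of_mem (hflvl a (by omega)) (hab ▸ gl2 (b-m) (by omega) hbl)
          omega
      · exfalso
        rw [if_neg cam, if_pos cbm] at hab
        have hal : a - m < n := by omega
        by_cases caq : a - m ≤ q
        · have := lvl_eq_of_mem (hflvl b (by omega)) (hab.symm ▸ gl1 (a-m) caq)
          omega
        · have := lvl_eq_of_mem (hflvl b (by omega)) (hab.symm ▸ gl2 (a-m) (by omega) hal)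
          omega
      · rw [if_neg cam, if_neg cbm] at hab
        have := ginj (a-m) (by omega) (b-m) (by omega) hab
        omega
    have := hcomb.length_le_card
    rw [mkc_length] at this
    rw [hlen, mkc_length]
    omega


lemma solD {j T : ℕ} (hj : j ≤ T) (hj1 : 1 ≤ j) {x u u' : V} (hx : x ∈ lvl E v j)
    (hu : u ∈ lvl E v (j-1)) (hu' : u' ∈ lvl E v (j-1)) (huu : u ≠ u')
    (hadj : Sym2.mk u x ∈ E) (hadj' : Sym2.mk u' x ∈ E) : Sol E v (2*T+3) := by
  have hj2 : 2 ≤ j := by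
    rcases Nat.lt_or_ge j 2 with h|h
    · exfalso
      have h1 : j - 1 = 0 := by omega
      rw [h1] at hu hu'
      exact huu ((mem_lvl_zero hu).trans (mem_lvl_zero hu').symm)
    · exact h
  set d := j - 1 with hd
  have hd1 : 1 ≤ d := by omega
  obtain ⟨f, hf0, hfd, hflvl, hfedge⟩ := exists_tree_path hu
  obtain ⟨f', hf'0, hf'd, hf'lvl, hf'edge⟩ := exists_tree_path hu'
  have hnej : f d ≠ f' d := by rw [hfd, hf'd]; exact huu
  obtain ⟨m, hmd, hmeet, hmax⟩ := exists_meet hf0 hf'0 hnej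
  set q := d - m with hq
  have hq1 : 1 ≤ q := by omega
  set n := 2*q + 2 with hn
  have hn3 : 3 ≤ n := by omega
  have hjm : j = m + q + 1 := by omega
  set g : ℕ → V := fun t => if t ≤ q then f (m+t) else if t = q+1 then x
    else f' (m + (2*q+2 - t)) with hg
  have gval1 : ∀ t, t ≤ q → g t = f (m+t) := by
    intro t ht; simp only [hg]; rw [if_pos ht]
  have gvalx : g (q+1) = x := by
    simp only [hg]; rw [if_neg (by omega)]; simp
  have gval2 : ∀ t, q+2 ≤ t → g t = f' (m + (2*q+2 - t)) := by
    intro t ht; simp only [hg]; rw [if_neg (by omega), if_neg (by omega)]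
  have gl1 : ∀ t, t ≤ q → g t ∈ lvl E v (m+t) := by
    intro t ht; rw [gval1 t ht]; exact hflvl (m+t) (by omega)
  have glx : g (q+1) ∈ lvl E v (m+q+1) := by
    rw [gvalx, ← hjm]; exact hx
  have gl2 : ∀ t, q+2 ≤ t → t < n → g t ∈ lvl E v (m + (2*q+2 - t)) := by
    intro t ht htn; rw [gval2 t ht]; exact hf'lvl (m + (2*q+2 - t)) (by omega)
  have ginj : ∀ a < n, ∀ b < n, g a = g b → a = b := by
    intro a ha b hb hab
    by_cases caq : a ≤ q <;> by_cases cbq : b ≤ q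
    · have := lvl_eq_of_mem (gl1 a caq) (hab ▸ gl1 b cbq)
      omega
    · by_cases cb1 : b = q+1
      · subst cb1
        have := lvl_eq_of_mem (gl1 a caq) (hab ▸ glx)
        omega
      · have := lvl_eq_of_mem (gl1 a caq) (hab ▸ gl2 b (by omega) hb)
        have ha' : a = 2*q+2-b := by omega
        exfalso
        have h1 : g a = f (m+a) := gval1 a caq
        have h2 : g b = f' (m + (2*q+2-b)) := gval2 b (by omega)
        rw [← ha'] at h2
        exact hmax (m+a) (by omega) (by omega) (by rw [← h1, ← h2]; exact hab)
    · by_cases ca1 : a = q+1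
      · subst ca1
        have := lvl_eq_of_mem (glx) (hab.symm ▸ gl1 b cbq)
        omega
      · have := lvl_eq_of_mem (gl1 b cbq) (hab.symm ▸ gl2 a (by omega) ha)
        have hb' : b = 2*q+2-a := by omega
        exfalso
        have h1 : g b = f (m+b) := gval1 b cbq
        have h2 : g a = f' (m + (2*q+2-a)) := gval2 a (by omega)
        rw [← hb'] at h2
        exact hmax (m+b) (by omega) (by omega) (by rw [← h1, ← h2]; exact hab.symm)
    · by_cases ca1 : a = q+1 <;> by_cases cb1 : b = q+1
      · omega
      · exfalso
        subst ca1
        have := lvl_eq_of_mem glx (hab ▸ gl2 b (by omega) hb)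
        omega
      · exfalso
        subst cb1
        have := lvl_eq_of_mem glx (hab.symm ▸ gl2 a (by omega) ha)
        omega
      · have := lvl_eq_of_mem (gl2 a (by omega) ha) (hab ▸ gl2 b (by omega) hb)
        omega
  have gedge : ∀ t, t < n → Sym2.mk (g t) (g ((t+1) % n)) ∈ E := by
    intro t ht
    rcases Nat.lt_trichotomy t q with h|h|h
    · have hmod : (t+1) % n = t+1 := Nat.mod_eq_of_lt (by omega)
      rw [hmod, gval1 t (by omega), gval1 (t+1) (by omega)]
      have e : m + (t+1) = (m+t) + 1 := by omega
      rw [e]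
      exact hfedge (m+t) (by omega)
    · -- t = q : edge u -- x
      have hmod : (t+1) % n = t+1 := Nat.mod_eq_of_lt (by omega)
      rw [hmod, gval1 t (by omega)]
      have e : t + 1 = q + 1 := by omega
      rw [e, gvalx]
      have e2 : m + t = d := by omega
      rw [e2, hfd]
      exact hadj
    · by_cases ht1 : t = q+1
      · -- edge x -- u'
        subst ht1
        have hmod : (q+1+1) % n = q+2 := Nat.mod_eq_of_lt (by omega)
        rw [hmod, gvalx, gval2 (q+2) (by omega)]
        have e : m + (2*q+2 - (q+2)) = d := by omega
        rw [e, hf'd]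
        rw [Sym2.eq_swap]
        exact hadj'
      · by_cases ht2 : t = 2*q+1
        · -- wrap-around
          subst ht2
          have hmod : (2*q+1+1) % n = 0 := by
            have : 2*q+1+1 = n := by omega
            rw [this, Nat.mod_self]
          rw [hmod, gval2 (2*q+1) (by omega), gval1 0 (by omega)]
          have e1 : m + (2*q+2 - (2*q+1)) = m + 1 := by omega
          have e2 : m + 0 = m := by omega
          rw [e1, e2, hmeet]
          rw [Sym2.eq_swap]
          exact hf'edge m (by omega)
        · -- f'-branch
          have hmod : (t+1) % n = t+1 := Nat.mod_eq_of_lt (by omega)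
          rw [hmod, gval2 t (by omega), gval2 (t+1) (by omega)]
          have e1 : m + (2*q+2 - t) = (m + (2*q+2 - (t+1))) + 1 := by omega
          rw [e1]
          rw [Sym2.eq_swap]
          exact hf'edge (m + (2*q+2 - (t+1))) (by omega)
  obtain ⟨hne, hnodup, hhead, hlast, hchain, hlen⟩ :=
    path_props (j := m) hf0 (fun t ht => hflvl t (by omega)) (fun t ht => hfedge t (by omega))
  refine ⟨mkc f (m+1), mkc g n, hne, mkc_ne_nil _ (by omega), hnodup,
    mkc_nodup _ ginj, hhead, ?_, hchain, ?_, ?_, ?_⟩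
  · rw [hlast, mkc_head? _ (by omega)]
    rw [gval1 0 (by omega)]
    norm_num
  · rw [mkc_cycle_edges _ (by omega)]
    apply coe_le_of_nodup
    · apply List.Nodup.map_on _ (List.nodup_range (n := n))
      intro a ha b hb hab
      rw [List.mem_range] at ha hb
      exact cycle_edge_fn_inj hn3 ginj a ha b hb hab
    · intro y hy
      rw [List.mem_map] at hy
      obtain ⟨t, ht, rfl⟩ := hy
      rw [List.mem_range] at ht
      exact gedge t ht
  · rw [hlen, mkc_length]
    omega
  · set h : ℕ → V := fun t => if t ≤ m then f t else g (t - m) with hh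
    have hcomb : (mkc h (m + n)).Nodup := by
      apply mkc_nodup
      intro a ha b hb hab
      simp only [hh] at hab
      by_cases cam : a ≤ m <;> by_cases cbm : b ≤ m
      · rw [if_pos cam, if_pos cbm] at hab
        exact tree_inj hflvl a (by omega) b (by omega) hab
      · exfalso
        rw [if_pos cam, if_neg cbm] at hab
        have hbl : b - m < n := by omega
        by_cases cbq : b - m ≤ q
        · have := lvl_eq_of_mem (hflvl a (by omega)) (hab ▸ gl1 (b-m) cbq)
          omega
        · by_cases cb1 : b - m = q+1
          · rw [cb1] at hab
            have := lvl_eq_of_mem (hflvl a (by omega)) (hab ▸ glx)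
            omega
          · have := lvl_eq_of_mem (hflvl a (by omega)) (hab ▸ gl2 (b-m) (by omega) hbl)
            omega
      · exfalso
        rw [if_neg cam, if_pos cbm] at hab
        have hal : a - m < n := by omega
        by_cases caq : a - m ≤ q
        · have := lvl_eq_of_mem (hflvl b (by omega)) (hab.symm ▸ gl1 (a-m) caq)
          omega
        · by_cases ca1 : a - m = q+1
          · rw [ca1] at hab
            have := lvl_eq_of_mem (hflvl b (by omega)) (hab.symm ▸ glx)
            omega
          · have := lvl_eq_of_mem (hflvl b (by omega)) (hab.symm ▸ gl2 (a-m) (by omega) hal)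
            omega
      · rw [if_neg cam, if_neg cbm] at hab
        have := ginj (a-m) (by omega) (b-m) (by omega) hab
        omega
    have := hcomb.length_le_card
    rw [mkc_length] at this
    rw [hlen, mkc_length]
    omega


lemma sol_of_bad {T : ℕ} (hbad : ¬ Good E v T) : Sol E v (2*T+3) := by
  by_cases h1 : ∀ j ≤ T, ∀ u ∈ lvl E v j, Sym2.diag u ∉ E
  · by_cases h2 : ∀ j ≤ T, ∀ j' ≤ T, ∀ u ∈ lvl E v j, ∀ w ∈ lvl E v j', u ≠ w →
        E.count (Sym2.mk u w) ≤ 1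
    · by_cases h3 : ∀ j ≤ T, ∀ u ∈ lvl E v j, ∀ w ∈ lvl E v j, u ≠ w → Sym2.mk u w ∉ E
      · by_cases h4 : ∀ j ≤ T, 1 ≤ j → ∀ x ∈ lvl E v j, ∀ u ∈ lvl E v (j-1),
            ∀ u' ∈ lvl E v (j-1), Sym2.mk u x ∈ E → Sym2.mk u' x ∈ E → u = u'
        · exact absurd ⟨h1, h2, h3, h4⟩ hbad
        · push_neg at h4
          obtain ⟨j, hj, hj1, x, hx, u, hu, u', hu', hadj, hadj', hne⟩ := h4
          exact solD hj hj1 hx hu hu' hne hadj hadj'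
      · push_neg at h3
        obtain ⟨j, hj, u, hu, w, hw, hne, hadj⟩ := h3
        exact solC hj hu hw hne hadj
    · push_neg at h2
      obtain ⟨j, hj, j', hj', u, hu, w, hw, hne, hcnt⟩ := h2
      have hcnt2 : 2 ≤ E.count (Sym2.mk u w) := by omega
      rcases le_total j j' with h|h
      · exact solB hj h hu hw hne hcnt2
      · refine solB hj' h hw hu hne.symm ?_
        rw [Sym2.eq_swap]
        exact hcnt2
  · push_neg at h1
    obtain ⟨j, hj, u, hu, hloop⟩ := h1
    exact solA hj hu hloop

lemma main_sol (hdeg : ∀ u : V, u ≠ v → 3 ≤ multigraphDegree E u)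
    (hdegv : 1 ≤ multigraphDegree E v) :
    ∃ T, Sol E v (2*T+3) ∧ 2^(T-1) ≤ Fintype.card V := by
  have hex := exists_bad hdeg hdegv
  set T := Nat.find hex with hT
  refine ⟨T, sol_of_bad (Nat.find_spec hex), ?_⟩
  rcases Nat.eq_zero_or_pos T with h|h
  · rw [h]
    simpa using Nat.succ_le_of_lt (Fintype.card_pos_iff.mpr ⟨v⟩)
  · have hgood : Good E v (T-1) := by
      have := Nat.find_min hex (m := T-1) (by omega)
      rw [not_not] at this
      exact this
    exact pow_bound hdeg hdegv h hgood

lemma arith {a T s : ℕ} (hs2 : 2 ≤ s) (h1 : a ≤ 2*T+3) (h2 : a ≤ s+1)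
    (h3 : 2^(T-1) ≤ s) : (a : ℝ) ≤ 4 * Real.logb 2 s := by
  have hspos : (0:ℝ) < s := by positivity
  have h2pos : (0:ℝ) < 2 := by norm_num
  have hlogb1 : (1:ℝ) ≤ Real.logb 2 s := by
    rw [← Real.logb_self_eq_one (b := 2) (by norm_num)]
    · exact (Real.logb_le_logb one_lt_two h2pos hspos).mpr (by exact_mod_cast hs2)
  rcases Nat.lt_or_ge s 6 with hs6|hs6
  · rcases Nat.lt_or_ge s 4 with hs4|hs4
    · -- s = 2 or 3 : a ≤ 4 ≤ 4 logb
      have ha4 : a ≤ 4 := by omega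
      calc (a:ℝ) ≤ 4 := by exact_mod_cast ha4
        _ = 4 * 1 := by ring
        _ ≤ 4 * Real.logb 2 s := by nlinarith
    · -- s = 4 or 5 : a ≤ 6 ≤ 8 ≤ 4 logb (logb ≥ 2)
      have hlogb2 : (2:ℝ) ≤ Real.logb 2 s := by
        have h4 : Real.logb 2 ((2:ℝ)^(2:ℕ)) = 2 := by
          rw [Real.logb_pow]
          rw [Real.logb_self_eq_one (by norm_num)]
          norm_num
        have hs4' : (4:ℝ) ≤ s := by exact_mod_cast hs4
        calc (2:ℝ) = Real.logb 2 ((2:ℝ)^(2:ℕ)) := h4.symm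
          _ ≤ Real.logb 2 s := by
              apply (Real.logb_le_logb one_lt_two (by positivity) hspos).mpr
              norm_num
              linarith
      have ha6 : a ≤ 6 := by omega
      calc (a:ℝ) ≤ 6 := by exact_mod_cast ha6
        _ ≤ 4 * 2 := by norm_num
        _ ≤ 4 * Real.logb 2 s := by nlinarith
  · -- s ≥ 6
    set k := T - 1 with hk
    have hTk : T ≤ k + 1 := by omega
    have hak : a ≤ 2*k + 5 := by omega
    have hklog : (k:ℝ) ≤ Real.logb 2 s := by
      have hkpow : Real.logb 2 ((2:ℝ)^(k:ℕ)) = k := by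
        rw [Real.logb_pow, Real.logb_self_eq_one (by norm_num)]
        norm_num
      rw [← hkpow]
      apply (Real.logb_le_logb one_lt_two (by positivity) hspos).mpr
      have := h3
      calc (2:ℝ)^(k:ℕ) = ((2^k : ℕ) : ℝ) := by push_cast; ring
        _ ≤ s := by exact_mod_cast h3
    have h5log : (5:ℝ) ≤ 2 * Real.logb 2 s := by
      have hsq : Real.logb 2 ((s:ℝ)^(2:ℕ)) = 2 * Real.logb 2 s := by
        rw [Real.logb_pow]; norm_num
      have h32 : Real.logb 2 ((2:ℝ)^(5:ℕ)) = 5 := by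
        rw [Real.logb_pow, Real.logb_self_eq_one (by norm_num)]
        norm_num
      rw [← hsq, ← h32]
      apply (Real.logb_le_logb one_lt_two (by norm_num) (by positivity)).mpr
      have hs6' : (6:ℝ) ≤ s := by exact_mod_cast hs6
      nlinarith
    calc (a:ℝ) ≤ 2*k + 5 := by exact_mod_cast hak
      _ ≤ 2 * Real.logb 2 s + 2 * Real.logb 2 s := by nlinarith
      _ = 4 * Real.logb 2 s := by ring

end Stmt3Aux

/-- Let `G` be a multigraph with `s ≥ 2` vertices, and `v` a vertex with
`deg(v) ≥ 1` such that all other vertices have degree at least `3`. Then `G` contains a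
path `p = (p₁,…,p_k)` (distinct vertices, consecutive ones joined by edges) starting at
`v` and a cycle `c = (c₁,…,c_ℓ)` (distinct vertices; its `ℓ` closed-walk edges occur in
`E` with multiplicity, so `ℓ = 1` is a self-loop and `ℓ = 2` a pair of parallel edges)
with `p_k = c₁`, `k, ℓ ≥ 1` and `k + ℓ ≤ 4·log₂(s)`. -/
theorem stmt_3 (V : Type*) [Fintype V] (E : Multiset (Sym2 V)) (s : ℕ)
    (hs : Fintype.card V = s) (hs2 : 2 ≤ s) (v : V)
    (hdegv : 1 ≤ multigraphDegree E v)
    (hdeg : ∀ u : V, u ≠ v → 3 ≤ multigraphDegree E u) :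
    ∃ p c : List V, p ≠ [] ∧ c ≠ [] ∧ p.Nodup ∧ c.Nodup ∧
      p.head? = some v ∧ p.getLast? = c.head? ∧
      p.Chain' (fun a b => Sym2.mk a b ∈ E) ∧
      (((c.zip (c.rotate 1)).map (Function.uncurry Sym2.mk) : List (Sym2 V)) : Multiset (Sym2 V)) ≤ E ∧
      (p.length + c.length : ℝ) ≤ 4 * Real.logb 2 s := by
  obtain ⟨T, hsol, hpow⟩ := Stmt3Aux.main_sol hdeg hdegv
  obtain ⟨p, c, hp, hc, hpn, hcn, hph, hpl, hpc, hce, hlen1, hlen2⟩ := hsol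
  refine ⟨p, c, hp, hc, hpn, hcn, hph, hpl, hpc, hce, ?_⟩
  rw [hs] at hpow hlen2
  have := Stmt3Aux.arith hs2 hlen1 hlen2 hpow
  calc (p.length + c.length : ℝ) = ((p.length + c.length : ℕ) : ℝ) := by push_cast; ring
    _ ≤ 4 * Real.logb 2 s := this
end

section
/- Let t ≥ 3, k ≥ t, and let s, m be positive integers satisfying s ≥ e³·k·(m/k)^{1/(t-1)}. Then C(s,k)·C(m,k)·(C(k,t)/C(s,t))^k ≤ e^{-k}, where C(a,b) denotes the binomial coefficient. In particular this quantity is strictly less than 1. -/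
lemma descFac_ratio (k s : ℕ) (hks : k ≤ s) :
    ∀ t, k.descFactorial t * s ^ t ≤ k ^ t * s.descFactorial t := by
  intro t
  induction t with
  | zero => simp
  | succ t ih =>
    rw [Nat.descFactorial_succ, Nat.descFactorial_succ, pow_succ, pow_succ]
    have h1 : (k - t) * s ≤ k * (s - t) := by
      rcases le_or_gt t k with h | h
      · have h2 : t ≤ s := h.trans hks
        zify [h, h2]; nlinarith
      · simp [Nat.sub_eq_zero_of_le h.le]
    calc (k - t) * k.descFactorial t * (s ^ t * s)
        = ((k - t) * s) * (k.descFactorial t * s ^ t) := by ring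
      _ ≤ (k * (s - t)) * (k ^ t * s.descFactorial t) := Nat.mul_le_mul h1 ih
      _ = k ^ t * k * ((s - t) * s.descFactorial t) := by ring

/-- For `t ≥ 3`, `k ≥ t`, and positive integers `s, m` with
`s ≥ e³·k·(m/k)^{1/(t-1)}`, we have
`C(s,k)·C(m,k)·(C(k,t)/C(s,t))^k ≤ e^{-k} < 1`. -/
theorem stmt_5 (t k s m : ℕ) (ht : 3 ≤ t) (hk : t ≤ k) (hs : 0 < s) (hm : 0 < m)
    (h : (s : ℝ) ≥ Real.exp 3 * k * ((m : ℝ) / k) ^ ((1 : ℝ) / ((t : ℝ) - 1))) :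
    (s.choose k : ℝ) * (m.choose k : ℝ) *
        ((k.choose t : ℝ) / (s.choose t : ℝ)) ^ k ≤ Real.exp (-(k : ℝ)) ∧
      (s.choose k : ℝ) * (m.choose k : ℝ) *
        ((k.choose t : ℝ) / (s.choose t : ℝ)) ^ k < 1 := by
  have hk0 : 0 < k := lt_of_lt_of_le (by norm_num) (ht.trans hk)
  have hkR : (0:ℝ) < k := by exact_mod_cast hk0
  suffices hmain : (s.choose k : ℝ) * (m.choose k : ℝ) *
      ((k.choose t : ℝ) / (s.choose t : ℝ)) ^ k ≤ Real.exp (-(k : ℝ)) by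
    refine ⟨hmain, hmain.trans_lt ?_⟩
    calc Real.exp (-(k:ℝ)) < Real.exp 0 := Real.exp_lt_exp.2 (by linarith)
      _ = 1 := Real.exp_zero
  rcases lt_or_ge m k with hmk | hmk
  · rw [Nat.choose_eq_zero_of_lt hmk]
    simpa using (Real.exp_pos _).le
  -- main case : k ≤ m
  have hmR : (0:ℝ) < m := by exact_mod_cast hm
  set c : ℝ := (t:ℝ) - 1 with hc
  have htR : (3:ℝ) ≤ t := by exact_mod_cast ht
  have hc0 : (0:ℝ) < c := by simp [hc]; linarith
  set x : ℝ := ((m:ℝ)/k) ^ ((1:ℝ)/c) with hxdef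
  have hmk1 : (1:ℝ) ≤ (m:ℝ)/k := (one_le_div hkR).2 (by exact_mod_cast hmk)
  have hx1 : (1:ℝ) ≤ x := Real.one_le_rpow hmk1 (by positivity)
  have hx0 : (0:ℝ) < x := lt_of_lt_of_le one_pos hx1
  have he3 : (1:ℝ) ≤ Real.exp 3 := Real.one_le_exp (by norm_num)
  have he3p : (0:ℝ) < Real.exp 3 := Real.exp_pos _
  have hskR : (k:ℝ) ≤ s := by
    have h1 : (k:ℝ) ≤ Real.exp 3 * k := le_mul_of_one_le_left hkR.le he3
    have h2 : Real.exp 3 * k ≤ Real.exp 3 * k * x := le_mul_of_one_le_right (by positivity) hx1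
    linarith
  have hks : k ≤ s := by exact_mod_cast hskR
  have hsR : (0:ℝ) < s := hkR.trans_le hskR
  -- x ^ (t-1) = m / k
  have hct : ((t - 1 : ℕ) : ℝ) = c := by
    have : 1 ≤ t := by omega
    push_cast [this]; ring
  have hxp : x ^ (t - 1) = (m:ℝ)/k := by
    rw [← Real.rpow_natCast x (t-1), hct, hxdef,
      ← Real.rpow_mul (by positivity), one_div,
      inv_mul_cancel₀ (ne_of_gt hc0), Real.rpow_one]
  -- ratio bound
  have hsct : (0:ℝ) < (s.choose t : ℝ) := by
    exact_mod_cast Nat.choose_pos (hk.trans hks)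
  have hratio : (k.choose t : ℝ) / (s.choose t : ℝ) ≤ ((k:ℝ)/s)^t := by
    have hnat : k.choose t * s ^ t ≤ k ^ t * s.choose t := by
      have h0 := descFac_ratio k s hks t
      rw [Nat.descFactorial_eq_factorial_mul_choose,
        Nat.descFactorial_eq_factorial_mul_choose] at h0
      have : t.factorial * (k.choose t * s ^ t) ≤ t.factorial * (k ^ t * s.choose t) := by
        calc t.factorial * (k.choose t * s ^ t)
            = t.factorial * k.choose t * s ^ t := by ring
          _ ≤ k ^ t * (t.factorial * s.choose t) := h0
          _ = t.factorial * (k ^ t * s.choose t) := by ring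
      exact Nat.le_of_mul_le_mul_left this t.factorial_pos
    rw [div_pow, div_le_div_iff₀ hsct (by positivity)]
    exact_mod_cast hnat
  -- choose bounds
  have hA : (s.choose k : ℝ) ≤ (s:ℝ)^k / k.factorial := Nat.choose_le_pow_div k s
  have hB : (m.choose k : ℝ) ≤ (m:ℝ)^k / k.factorial := Nat.choose_le_pow_div k m
  have hfacpos : (0:ℝ) < (k.factorial : ℝ) := by exact_mod_cast k.factorial_pos
  have hfac : ((k.factorial : ℝ))⁻¹ ≤ Real.exp k / (k:ℝ)^k := by
    have h1 : (k:ℝ)^k / k.factorial ≤ Real.exp k :=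
      Real.pow_div_factorial_le_exp (k:ℝ) hkR.le k
    rw [div_le_iff₀ hfacpos] at h1
    rw [inv_eq_one_div, div_le_div_iff₀ hfacpos (by positivity)]
    linarith
  -- Step 1 : bound LHS by explicit real expression
  have hstep1 : (s.choose k : ℝ) * (m.choose k : ℝ) *
      ((k.choose t : ℝ) / (s.choose t : ℝ)) ^ k ≤
      ((s:ℝ)^k / k.factorial) * ((m:ℝ)^k / k.factorial) * (((k:ℝ)/s)^t)^k := by
    have hcnn : (0:ℝ) ≤ (k.choose t : ℝ) / (s.choose t : ℝ) := by positivity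
    exact mul_le_mul (mul_le_mul hA hB (Nat.cast_nonneg _) (by positivity))
      (pow_le_pow_left₀ hcnn hratio k) (pow_nonneg hcnn k) (by positivity)
  -- Step 2 : bound by B ^ k
  set B : ℝ := Real.exp 2 * ((m:ℝ)/k) * (((k:ℝ)/s)^(t-1)) with hBdef
  have hstep2 : ((s:ℝ)^k / k.factorial) * ((m:ℝ)^k / k.factorial) * (((k:ℝ)/s)^t)^k
      ≤ B ^ k := by
    have e1 : (s:ℝ)^k / k.factorial ≤ (Real.exp 1 * s / k)^k := by
      rw [div_eq_mul_inv]
      calc (s:ℝ)^k * ((k.factorial:ℝ))⁻¹ ≤ (s:ℝ)^k * (Real.exp k / (k:ℝ)^k) := by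
            gcongr
        _ = (Real.exp 1 * s / k)^k := by
            rw [div_pow, mul_pow, ← Real.exp_one_pow]
            field_simp
    have e2 : (m:ℝ)^k / k.factorial ≤ (Real.exp 1 * m / k)^k := by
      rw [div_eq_mul_inv]
      calc (m:ℝ)^k * ((k.factorial:ℝ))⁻¹ ≤ (m:ℝ)^k * (Real.exp k / (k:ℝ)^k) := by
            gcongr
        _ = (Real.exp 1 * m / k)^k := by
            rw [div_pow, mul_pow, ← Real.exp_one_pow]
            field_simp
    calc ((s:ℝ)^k / k.factorial) * ((m:ℝ)^k / k.factorial) * (((k:ℝ)/s)^t)^k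
        ≤ (Real.exp 1 * s / k)^k * ((Real.exp 1 * m / k)^k) * (((k:ℝ)/s)^t)^k := by
          gcongr <;> positivity
      _ = ((Real.exp 1 * s / k) * (Real.exp 1 * m / k) * ((k:ℝ)/s)^t)^k := by
          rw [← mul_pow, ← mul_pow]
      _ = B ^ k := by
          congr 1
          have hsplit : ((k:ℝ)/s)^t = ((k:ℝ)/s)^(t-1) * ((k:ℝ)/s) := by
            rw [← pow_succ]
            congr 1
            omega
          have he2 : Real.exp 1 * Real.exp 1 = Real.exp 2 := by
            rw [← Real.exp_add]; norm_num
          have hone : (s:ℝ)/k * ((k:ℝ)/s) = 1 := by field_simp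
          calc Real.exp 1 * s / k * (Real.exp 1 * m / k) * ((k:ℝ)/s)^t
              = Real.exp 1 * s / k * (Real.exp 1 * m / k) * (((k:ℝ)/s)^(t-1) * ((k:ℝ)/s)) := by
                rw [hsplit]
            _ = (Real.exp 1 * Real.exp 1) * ((m:ℝ)/k) * ((k:ℝ)/s)^(t-1) * ((s:ℝ)/k * ((k:ℝ)/s)) := by
                ring
            _ = B := by rw [he2, hone, mul_one, hBdef]
  -- B ≤ exp (-1)
  have ha : (k:ℝ)/s ≤ 1/(Real.exp 3 * x) := by
    rw [div_le_div_iff₀ hsR (by positivity)]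
    calc (k:ℝ) * (Real.exp 3 * x) = Real.exp 3 * k * x := by ring
      _ ≤ s := h
      _ = 1 * s := (one_mul _).symm
  have hB1 : B ≤ Real.exp (-1) := by
    have hap : (0:ℝ) ≤ (k:ℝ)/s := by positivity
    have h2 : ((k:ℝ)/s)^(t-1) ≤ (1/(Real.exp 3 * x))^(t-1) := pow_le_pow_left₀ hap ha _
    have h3 : (1/(Real.exp 3 * x))^(t-1) = 1/(Real.exp (3 * c) * ((m:ℝ)/k)) := by
      rw [div_pow, one_pow, mul_pow, hxp, ← Real.exp_nat_mul, hct]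
      ring_nf
    calc B = Real.exp 2 * ((m:ℝ)/k) * (((k:ℝ)/s)^(t-1)) := hBdef
      _ ≤ Real.exp 2 * ((m:ℝ)/k) * (1/(Real.exp (3*c) * ((m:ℝ)/k))) :=
          mul_le_mul_of_nonneg_left (le_trans h2 h3.le) (by positivity)
      _ = Real.exp 2 / Real.exp (3*c) := by
          field_simp
      _ = Real.exp (2 - 3*c) := (Real.exp_sub _ _).symm
      _ ≤ Real.exp (-1) := by
          apply Real.exp_le_exp.2
          simp only [hc]; linarith
  -- conclude
  have hBnn : (0:ℝ) ≤ B := by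
    rw [hBdef]; positivity
  calc (s.choose k : ℝ) * (m.choose k : ℝ) *
      ((k.choose t : ℝ) / (s.choose t : ℝ)) ^ k
      ≤ ((s:ℝ)^k / k.factorial) * ((m:ℝ)^k / k.factorial) * (((k:ℝ)/s)^t)^k := hstep1
    _ ≤ B ^ k := hstep2
    _ ≤ Real.exp (-1) ^ k := pow_le_pow_left₀ hBnn hB1 k
    _ = Real.exp (-(k:ℝ)) := by rw [← Real.exp_nat_mul]; norm_num
end
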